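/- arXiv:1708.07390 — 4 statements merged into one kernel-verified Lean document; each statement's English description precedes it below -/
import Mathlib

section
/- Let M be a finitely generated ℕ^r-graded module over S = K[x_1,…,x_r] and let p = ⟨x_1,…,x_k⟩ be an associated prime of M. Then there exists a polynomial P ∈ ℤ[t_1,…,t_r] such that, as an identity of formal power series, ∏_{i=k+1}^{r}(1−t_i) · HS(H^0_p(M), t) = P(t_1,…,t_r); that is, HS(H^0_p(M),t) = P(t_1,…,t_r)/∏_{i=k+1}^{r}(1−t_i). -/
/-!
STATEMENT 12: Let `M` be a finitely generated ℕ^r-graded module over `S = K[x_1,…,x_r]`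
and let `p = ⟨x_1,…,x_k⟩` be an associated prime of `M`.  Then there is a polynomial
`P ∈ ℤ[t_1,…,t_r]` such that, as formal power series,
`∏_{i=k+1}^r (1 − t_i) · HS(H^0_p(M), t) = P(t_1,…,t_r)`.
Here `H^0_p(M) = {m | ∃ n, p^n · m = 0}` is the zeroth local cohomology, an ℕ^r-graded
submodule of `M` whose graded piece in degree `u` is `H^0_p(M) ∩ M_u`.
-/

set_option linter.unusedSectionVars false
namespace St12
open scoped Classical

variable {r : ℕ}

noncomputable def ind (B : Set (Fin r →₀ ℕ)) : MvPowerSeries (Fin r) ℤ :=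
  fun u => if u ∈ B then 1 else 0

lemma coeff_ind (B : Set (Fin r →₀ ℕ)) (u : Fin r →₀ ℕ) :
    MvPowerSeries.coeff u (ind B) = if u ∈ B then 1 else 0 := rfl

-- test basic facts
example (i : Fin r) (u : Fin r →₀ ℕ) (f : MvPowerSeries (Fin r) ℤ) :
    MvPowerSeries.coeff u (MvPowerSeries.X i * f) =
      if Finsupp.single i 1 ≤ u then MvPowerSeries.coeff (u - Finsupp.single i 1) f else 0 := by
  rw [MvPowerSeries.X, MvPowerSeries.coeff_monomial_mul]
  simp

lemma sup_apply_zero (G : Finset (Fin r →₀ ℕ)) (i : Fin r) (h : ∀ f ∈ G, f i = 0) :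
    (G.sup id) i = 0 := by
  induction G using Finset.induction_on with
  | empty => simp [Finsupp.bot_eq_zero]
  | insert _ _ hni ih =>
      rename_i a s
      rw [Finset.sup_insert, Finsupp.sup_apply]
      simp only [id]
      rw [h a (Finset.mem_insert_self a s), ih (fun f hf => h f (Finset.mem_insert_of_mem hf))]
      simp

lemma prod_ind (G : Finset (Fin r →₀ ℕ)) (u : Fin r →₀ ℕ) :
    (∏ f ∈ G, if f ≤ u then (1 : ℤ) else 0) = if G.sup id ≤ u then 1 else 0 := by
  by_cases h : G.sup id ≤ u
  · rw [if_pos h]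
    apply Finset.prod_eq_one
    intro f hf
    have : f ≤ u := (Finset.le_sup (f := id) hf).trans h
    rw [if_pos this]
  · rw [if_neg h]
    rw [Finset.sup_le_iff] at h
    push_neg at h
    obtain ⟨f, hf, hfu⟩ := h
    exact Finset.prod_eq_zero hf (if_neg hfu)

lemma expansion (F : Finset (Fin r →₀ ℕ)) (u : Fin r →₀ ℕ) :
    (∑ G ∈ F.powerset, (-1 : ℤ) ^ G.card * (if G.sup id ≤ u then 1 else 0)) =
      if ∀ f ∈ F, ¬ f ≤ u then 1 else 0 := by
  have h1 : ∀ G : Finset (Fin r →₀ ℕ), (-1 : ℤ) ^ G.card * (if G.sup id ≤ u then 1 else 0)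
      = ∏ f ∈ G, (- (if f ≤ u then (1:ℤ) else 0)) := by
    intro G
    rw [← prod_ind]
    calc (-1:ℤ)^G.card * ∏ f ∈ G, (if f ≤ u then (1:ℤ) else 0)
        = (∏ _f ∈ G, (-1:ℤ)) * ∏ f ∈ G, (if f ≤ u then (1:ℤ) else 0) := by rw [Finset.prod_const]
      _ = ∏ f ∈ G, ((-1) * (if f ≤ u then (1:ℤ) else 0)) := Finset.prod_mul_distrib.symm
      _ = ∏ f ∈ G, (- (if f ≤ u then (1:ℤ) else 0)) := by
            refine Finset.prod_congr rfl fun f _ => by ring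
  have h2 : (∏ f ∈ F, ((- (if f ≤ u then (1:ℤ) else 0)) + 1)) =
      ∑ G ∈ F.powerset, (-1 : ℤ) ^ G.card * (if G.sup id ≤ u then 1 else 0) := by
    rw [Finset.prod_add]
    refine Finset.sum_congr rfl fun G hG => ?_
    rw [h1 G, Finset.prod_const_one, mul_one]
  rw [← h2]
  by_cases h : ∀ f ∈ F, ¬ f ≤ u
  · rw [if_pos h]
    apply Finset.prod_eq_one
    intro f hf
    rw [if_neg (h f hf)]
    ring
  · rw [if_neg h]
    push_neg at h
    obtain ⟨f, hf, hfu⟩ := h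
    apply Finset.prod_eq_zero hf
    rw [if_pos hfu]
    ring


noncomputable def ET (t : Finset (Fin r)) : MvPowerSeries (Fin r) ℤ :=
  ind {w | ∀ i ∉ t, w i = 0}

lemma coeff_X_mul (i : Fin r) (u : Fin r →₀ ℕ) (f : MvPowerSeries (Fin r) ℤ) :
    MvPowerSeries.coeff u (MvPowerSeries.X i * f) =
      if Finsupp.single i 1 ≤ u then MvPowerSeries.coeff (u - Finsupp.single i 1) f else 0 := by
  rw [MvPowerSeries.X, MvPowerSeries.coeff_monomial_mul]
  simp

lemma ET_step {i : Fin r} {t : Finset (Fin r)} (hi : i ∉ t) :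
    (1 - MvPowerSeries.X i : MvPowerSeries (Fin r) ℤ) * ET (insert i t) = ET t := by
  apply MvPowerSeries.ext
  intro u
  rw [sub_mul, one_mul, map_sub, coeff_X_mul]
  simp only [ET, coeff_ind]
  by_cases h : u i = 0
  · have hsle : ¬ Finsupp.single i 1 ≤ u := by
      rw [Finsupp.single_le_iff, h]; omega
    rw [if_neg hsle, sub_zero]
    have hiff2 : (u ∈ {w : Fin r →₀ ℕ | ∀ j ∉ insert i t, w j = 0}) ↔
        (u ∈ {w : Fin r →₀ ℕ | ∀ j ∉ t, w j = 0}) := by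
      constructor
      · intro hall j hj
        by_cases hji : j = i
        · subst hji; exact h
        · exact hall j (by simp [hji, hj])
      · intro hall j hj
        exact hall j (fun hjt => hj (Finset.mem_insert_of_mem hjt))
    by_cases hm : u ∈ {w : Fin r →₀ ℕ | ∀ j ∉ insert i t, w j = 0}
    · rw [if_pos hm, if_pos (hiff2.mp hm)]
    · rw [if_neg hm, if_neg (fun hc => hm (hiff2.mpr hc))]
  · have hsle : Finsupp.single i 1 ≤ u := by
      rw [Finsupp.single_le_iff]; omega
    rw [if_pos hsle]
    have hrhs : ¬ (u ∈ {w : Fin r →₀ ℕ | ∀ j ∉ t, w j = 0}) := by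
      intro hmem
      exact h (hmem i hi)
    rw [if_neg hrhs]
    have hiff : (u ∈ {w : Fin r →₀ ℕ | ∀ j ∉ insert i t, w j = 0}) ↔
        ((u - Finsupp.single i 1) ∈ {w : Fin r →₀ ℕ | ∀ j ∉ insert i t, w j = 0}) := by
      constructor
      · intro hall j hj
        have hji : j ≠ i := fun hji => hj (hji ▸ Finset.mem_insert_self i t)
        have hthis := hall j hj
        rw [Finsupp.tsub_apply, Finsupp.single_apply, if_neg (Ne.symm hji), hthis]
        omega
      · intro hall j hj
        have hji : j ≠ i := fun hji => hj (hji ▸ Finset.mem_insert_self i t)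
        have hthis := hall j hj
        rw [Finsupp.tsub_apply, Finsupp.single_apply, if_neg (Ne.symm hji), Nat.sub_zero] at hthis
        exact hthis
    by_cases hm : u ∈ {w : Fin r →₀ ℕ | ∀ j ∉ insert i t, w j = 0}
    · rw [if_pos hm, if_pos (hiff.mp hm), sub_self]
    · rw [if_neg hm, if_neg (fun hc => hm (hiff.mpr hc)), sub_self]

lemma ET_unit (t : Finset (Fin r)) :
    (∏ i ∈ t, (1 - MvPowerSeries.X i : MvPowerSeries (Fin r) ℤ)) * ET t = 1 := by
  induction t using Finset.induction_on with
  | empty =>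
      rw [Finset.prod_empty, one_mul]
      apply MvPowerSeries.ext
      intro u
      rw [ET, coeff_ind, MvPowerSeries.coeff_one]
      have hiff : (u ∈ {w : Fin r →₀ ℕ | ∀ j ∉ (∅ : Finset (Fin r)), w j = 0}) ↔ u = 0 := by
        constructor
        · intro hall; ext j; exact hall j (Finset.notMem_empty j)
        · intro h0 j _; rw [h0]; rfl
      by_cases hm : u = 0
      · rw [if_pos (hiff.mpr hm), if_pos hm]
      · rw [if_neg (fun hc => hm (hiff.mp hc)), if_neg hm]
  | insert _ _ hni ih =>
      rename_i a s
      rw [Finset.prod_insert hni]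
      have hre : ((1 - MvPowerSeries.X a) * ∏ i ∈ s, (1 - MvPowerSeries.X i :
            MvPowerSeries (Fin r) ℤ)) * ET (insert a s)
          = (∏ i ∈ s, (1 - MvPowerSeries.X i : MvPowerSeries (Fin r) ℤ)) *
            ((1 - MvPowerSeries.X a) * ET (insert a s)) := by ring
      rw [hre, ET_step hni, ih]


lemma dickson (Us : Set (Fin r →₀ ℕ)) :
    ∃ F : Finset (Fin r →₀ ℕ), (↑F ⊆ Us) ∧ (∀ w ∈ Us, ∃ f ∈ F, f ≤ w) := by
  set Fs : Set (Fin r →₀ ℕ) := {w | w ∈ Us ∧ ∀ v ∈ Us, v ≤ w → v = w} with hFs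
  have hanti : IsAntichain (· ≤ ·) Fs := by
    intro a ha b hb hab hle
    exact hab (hb.2 a ha.1 hle)
  have hfin : Fs.Finite :=
    hanti.finite_of_partiallyWellOrderedOn (Set.isPWO_of_wellQuasiOrderedLE Fs)
  refine ⟨hfin.toFinset, ?_, ?_⟩
  · intro f hf
    simp only [Finset.mem_coe, Set.Finite.mem_toFinset] at hf
    exact hf.1
  · intro w hw
    have hV : ∀ s : Set (Fin r →₀ ℕ), s.IsWF := fun s => (Set.isPWO_of_wellQuasiOrderedLE s).isWF
    set V : Set (Fin r →₀ ℕ) := {v | v ∈ Us ∧ v ≤ w} with hVdef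
    have hne : V.Nonempty := ⟨w, hw, le_rfl⟩
    set f := (hV V).min hne with hf
    have hfV : f ∈ V := (hV V).min_mem hne
    refine ⟨f, ?_, hfV.2⟩
    rw [Set.Finite.mem_toFinset, hFs]
    refine ⟨hfV.1, fun v hv hvf => ?_⟩
    have hvV : v ∈ V := ⟨hv, hvf.trans hfV.2⟩
    by_contra hne2
    exact (hV V).not_lt_min hne hvV (lt_of_le_of_ne hvf hne2)

lemma slice_poly (T : Finset (Fin r)) (A : Set (Fin r →₀ ℕ))
    (hsupp : ∀ w ∈ A, ∀ i ∉ T, w i = 0)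
    (hdc : ∀ v ∈ A, ∀ w ≤ v, w ∈ A) :
    ∃ P : MvPolynomial (Fin r) ℤ,
      (∏ i ∈ T, (1 - MvPowerSeries.X i)) * ind A = ↑P := by
  obtain ⟨F, hFU, hcov⟩ := dickson {w : Fin r →₀ ℕ | (∀ i ∉ T, w i = 0) ∧ w ∉ A}
  have hchar : ∀ w : Fin r →₀ ℕ, (∀ i ∉ T, w i = 0) → (w ∈ A ↔ ∀ f ∈ F, ¬ f ≤ w) := by
    intro w hw
    constructor
    · intro hwA f hf hfw
      exact (hFU hf).2 (hdc w hwA f hfw)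
    · intro hnall
      by_contra hwA
      obtain ⟨f, hfF, hfw⟩ := hcov w ⟨hw, hwA⟩
      exact hnall f hfF hfw
  have hkey : ind A = ∑ G ∈ F.powerset,
      (MvPowerSeries.monomial (G.sup id) ((-1 : ℤ)^G.card)) * ET T := by
    apply MvPowerSeries.ext
    intro u
    rw [coeff_ind, map_sum]
    have hterm : ∀ G ∈ F.powerset,
        MvPowerSeries.coeff u ((MvPowerSeries.monomial (G.sup id) ((-1 : ℤ)^G.card)) * ET T)
        = (-1 : ℤ)^G.card * (if G.sup id ≤ u then 1 else 0)
          * (if G.sup id ≤ u then (if ∀ i ∉ T, (u - G.sup id) i = 0 then 1 else 0) else 1) := by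
      intro G _
      rw [MvPowerSeries.coeff_monomial_mul]
      by_cases hle : G.sup id ≤ u
      · rw [if_pos hle, if_pos hle, if_pos hle, mul_one, ET, coeff_ind]
        simp only [Set.mem_setOf_eq]
      · rw [if_neg hle, if_neg hle, if_neg hle]
        ring
    rw [Finset.sum_congr rfl hterm]
    by_cases hu : ∀ i ∉ T, u i = 0
    · have hz : ∀ G : Finset (Fin r →₀ ℕ), G.sup id ≤ u → ∀ i ∉ T, (u - G.sup id) i = 0 := by
        intro G hle i hi
        rw [Finsupp.tsub_apply, hu i hi]
        omega
      have : ∀ G ∈ F.powerset,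
          (-1 : ℤ)^G.card * (if G.sup id ≤ u then 1 else 0)
            * (if G.sup id ≤ u then (if ∀ i ∉ T, (u - G.sup id) i = 0 then 1 else 0) else 1)
          = (-1 : ℤ)^G.card * (if G.sup id ≤ u then 1 else 0) := by
        intro G _
        by_cases hle : G.sup id ≤ u
        · rw [if_pos hle, if_pos hle, if_pos (hz G hle), mul_one]
        · rw [if_neg hle, if_neg hle]
          ring
      rw [Finset.sum_congr rfl this, expansion]
      by_cases hA : u ∈ A
      · rw [if_pos hA, if_pos ((hchar u hu).mp hA)]
      · rw [if_neg hA, if_neg (fun hc => hA ((hchar u hu).mpr hc))]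
    · push_neg at hu
      obtain ⟨i, hi, hui⟩ := hu
      have hA : u ∉ A := fun hc => hui (hsupp u hc i hi)
      rw [if_neg hA]
      symm
      apply Finset.sum_eq_zero
      intro G hG
      by_cases hle : G.sup id ≤ u
      · have hsup0 : (G.sup id) i = 0 := by
          apply sup_apply_zero
          intro f hf
          exact (hFU (Finset.mem_powerset.mp hG hf)).1 i hi
        have : ¬ ∀ j ∉ T, (u - G.sup id) j = 0 := by
          intro hall
          have := hall i hi
          rw [Finsupp.tsub_apply, hsup0, Nat.sub_zero] at this
          exact hui this
        rw [if_pos hle, if_pos hle, if_neg this, mul_zero]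
      · rw [if_neg hle]
        simp
  refine ⟨∑ G ∈ F.powerset, MvPolynomial.monomial (G.sup id) ((-1 : ℤ)^G.card), ?_⟩
  rw [hkey, Finset.mul_sum]
  rw [show ((∑ G ∈ F.powerset, MvPolynomial.monomial (G.sup id) ((-1 : ℤ)^G.card) :
      MvPolynomial (Fin r) ℤ) : MvPowerSeries (Fin r) ℤ)
    = ∑ G ∈ F.powerset, ((MvPolynomial.monomial (G.sup id) ((-1 : ℤ)^G.card) :
      MvPolynomial (Fin r) ℤ) : MvPowerSeries (Fin r) ℤ)
    from map_sum MvPolynomial.coeToMvPowerSeries.ringHom _ _]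
  refine Finset.sum_congr rfl fun G _ => ?_
  rw [MvPolynomial.coe_monomial]
  have : (∏ i ∈ T, (1 - MvPowerSeries.X i : MvPowerSeries (Fin r) ℤ)) *
      ((MvPowerSeries.monomial (G.sup id) ((-1 : ℤ)^G.card)) * ET T)
      = (MvPowerSeries.monomial (G.sup id) ((-1 : ℤ)^G.card)) *
        ((∏ i ∈ T, (1 - MvPowerSeries.X i : MvPowerSeries (Fin r) ℤ)) * ET T) := by ring
  rw [this, ET_unit, mul_one]


lemma slicing (T : Finset (Fin r)) (A : Set (Fin r →₀ ℕ)) (n : ℕ)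
    (hbd : ∀ v ∈ A, ∀ i ∉ T, v i < n) :
    ind A = ∑ b ∈ Finset.Iic (∑ i ∈ Tᶜ, Finsupp.single i (n - 1)),
      (MvPowerSeries.monomial b 1) * ind {w | (∀ i ∉ T, w i = 0) ∧ b + w ∈ A} := by
  set bmax : Fin r →₀ ℕ := ∑ i ∈ Tᶜ, Finsupp.single i (n - 1) with hbmax
  have hbmax_apply : ∀ j : Fin r, bmax j = if j ∈ Tᶜ then n - 1 else 0 := by
    intro j
    rw [hbmax, Finset.sum_apply']
    have hterm : ∀ x ∈ Tᶜ, (Finsupp.single x (n-1)) j = if x = j then n - 1 else 0 :=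
      fun x _ => Finsupp.single_apply
    rw [Finset.sum_congr rfl hterm, Finset.sum_ite_eq' Tᶜ j (fun _ => n - 1)]
  apply MvPowerSeries.ext
  intro u
  rw [coeff_ind, map_sum]
  have hterm : ∀ b ∈ Finset.Iic bmax,
      MvPowerSeries.coeff u ((MvPowerSeries.monomial b 1) *
        ind {w | (∀ i ∉ T, w i = 0) ∧ b + w ∈ A})
      = if b ≤ u ∧ (∀ i ∉ T, (u - b) i = 0) ∧ b + (u - b) ∈ A then 1 else 0 := by
    intro b _
    rw [MvPowerSeries.coeff_monomial_mul]
    by_cases hle : b ≤ u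
    · rw [if_pos hle, one_mul, coeff_ind]
      simp only [Set.mem_setOf_eq]
      by_cases hc : (∀ i ∉ T, (u - b) i = 0) ∧ b + (u - b) ∈ A
      · rw [if_pos hc, if_pos ⟨hle, hc⟩]
      · rw [if_neg hc, if_neg (fun hh => hc hh.2)]
    · rw [if_neg hle, if_neg (fun hh => hle hh.1)]
  rw [Finset.sum_congr rfl hterm]
  by_cases hA : u ∈ A
  · rw [if_pos hA]
    set b0 : Fin r →₀ ℕ := u.filter (fun j => j ∉ T) with hb0
    have hb0_apply : ∀ j, b0 j = if j ∉ T then u j else 0 := by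
      intro j
      rw [hb0, Finsupp.filter_apply]
    have hb0u : b0 ≤ u := by
      rw [Finsupp.le_def]
      intro j
      rw [hb0_apply]
      split_ifs <;> omega
    have hmem : b0 ∈ Finset.Iic bmax := by
      rw [Finset.mem_Iic, Finsupp.le_def]
      intro j
      rw [hb0_apply, hbmax_apply]
      by_cases hj : j ∈ T
      · rw [if_neg (not_not_intro hj)]
        exact Nat.zero_le _
      · have hlt := hbd u hA j hj
        rw [if_pos hj, if_pos (Finset.mem_compl.mpr hj)]
        omega
    rw [Finset.sum_eq_single_of_mem b0 hmem]
    · have h1 : ∀ i ∉ T, (u - b0) i = 0 := by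
        intro i hi
        rw [Finsupp.tsub_apply, hb0_apply, if_pos hi]
        omega
      have h2 : b0 + (u - b0) = u := add_tsub_cancel_of_le hb0u
      rw [if_pos ⟨hb0u, h1, h2.symm ▸ hA⟩]
    · intro b hb hne
      by_cases hcond : b ≤ u ∧ (∀ i ∉ T, (u - b) i = 0) ∧ b + (u - b) ∈ A
      · exfalso
        apply hne
        ext j
        by_cases hj : j ∈ T
        · have hbj : b j = 0 := by
            rw [Finset.mem_Iic, Finsupp.le_def] at hb
            have := hb j
            rw [hbmax_apply] at this
            simp [hj] at this
            omega
          rw [hbj, hb0_apply, if_neg (not_not_intro hj)]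
        · have h1 := hcond.2.1 j hj
          rw [Finsupp.tsub_apply] at h1
          have h2 : b j ≤ u j := (Finsupp.le_def.mp hcond.1) j
          rw [hb0_apply, if_pos hj]
          omega
      · rw [if_neg hcond]
  · rw [if_neg hA]
    symm
    apply Finset.sum_eq_zero
    intro b _
    have : ¬ (b ≤ u ∧ (∀ i ∉ T, (u - b) i = 0) ∧ b + (u - b) ∈ A) := by
      rintro ⟨hle, _, hmem⟩
      rw [add_tsub_cancel_of_le hle] at hmem
      exact hA hmem
    rw [if_neg this]

lemma comb (T : Finset (Fin r)) (A : Set (Fin r →₀ ℕ))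
    (hdc : ∀ v ∈ A, ∀ w ≤ v, w ∈ A) (n : ℕ)
    (hbd : ∀ v ∈ A, ∀ i ∉ T, v i < n) :
    ∃ P : MvPolynomial (Fin r) ℤ,
      (∏ i ∈ T, (1 - MvPowerSeries.X i)) * ind A = ↑P := by
  have hslices : ∀ b : Fin r →₀ ℕ, ∃ P : MvPolynomial (Fin r) ℤ,
      (∏ i ∈ T, (1 - MvPowerSeries.X i)) *
        ind {w | (∀ i ∉ T, w i = 0) ∧ b + w ∈ A} = ↑P := by
    intro b
    apply slice_poly
    · intro w hw i hi
      exact hw.1 i hi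
    · rintro v ⟨hv1, hv2⟩ w hw
      refine ⟨fun i hi => ?_, hdc _ hv2 _ ((add_le_add_iff_left b).mpr hw)⟩
      have := hv1 i hi
      have h2 := (Finsupp.le_def.mp hw) i
      omega
  choose Pb hPb using hslices
  refine ⟨∑ b ∈ Finset.Iic (∑ i ∈ Tᶜ, Finsupp.single i (n - 1)),
    MvPolynomial.monomial b 1 * Pb b, ?_⟩
  rw [slicing T A n hbd, Finset.mul_sum]
  rw [show ((∑ b ∈ Finset.Iic (∑ i ∈ Tᶜ, Finsupp.single i (n - 1)),
      MvPolynomial.monomial b 1 * Pb b : MvPolynomial (Fin r) ℤ) : MvPowerSeries (Fin r) ℤ)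
    = ∑ b ∈ Finset.Iic (∑ i ∈ Tᶜ, Finsupp.single i (n - 1)),
      ((MvPolynomial.monomial b 1 * Pb b : MvPolynomial (Fin r) ℤ) : MvPowerSeries (Fin r) ℤ)
    from map_sum MvPolynomial.coeToMvPowerSeries.ringHom _ _]
  refine Finset.sum_congr rfl fun b _ => ?_
  rw [MvPolynomial.coe_mul, MvPolynomial.coe_monomial]
  rw [show (∏ i ∈ T, (1 - MvPowerSeries.X i : MvPowerSeries (Fin r) ℤ)) *
      ((MvPowerSeries.monomial b 1) * ind {w | (∀ i ∉ T, w i = 0) ∧ b + w ∈ A})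
    = (MvPowerSeries.monomial b 1) *
      ((∏ i ∈ T, (1 - MvPowerSeries.X i : MvPowerSeries (Fin r) ℤ)) *
        ind {w | (∀ i ∉ T, w i = 0) ∧ b + w ∈ A}) from by ring]
  rw [hPb b]

lemma comb_shift (T : Finset (Fin r)) (A : Set (Fin r →₀ ℕ))
    (hdc : ∀ v ∈ A, ∀ w ≤ v, w ∈ A) (n : ℕ)
    (hbd : ∀ v ∈ A, ∀ i ∉ T, v i < n) (d : Fin r →₀ ℕ) :
    ∃ P : MvPolynomial (Fin r) ℤ,
      (∏ i ∈ T, (1 - MvPowerSeries.X i)) * ind {u | d ≤ u ∧ u - d ∈ A} = ↑P := by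
  obtain ⟨P, hP⟩ := comb T A hdc n hbd
  have hshift : ind {u : Fin r →₀ ℕ | d ≤ u ∧ u - d ∈ A}
      = (MvPowerSeries.monomial d 1) * ind A := by
    apply MvPowerSeries.ext
    intro u
    rw [coeff_ind, MvPowerSeries.coeff_monomial_mul]
    by_cases hle : d ≤ u
    · rw [if_pos hle, one_mul, coeff_ind]
      simp only [Set.mem_setOf_eq]
      by_cases hm : u - d ∈ A
      · rw [if_pos hm, if_pos ⟨hle, hm⟩]
      · rw [if_neg hm, if_neg (fun hh => hm hh.2)]
    · rw [if_neg hle, if_neg (fun hh => hle hh.1)]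
  refine ⟨MvPolynomial.monomial d 1 * P, ?_⟩
  rw [hshift, MvPolynomial.coe_mul, MvPolynomial.coe_monomial]
  rw [show (∏ i ∈ T, (1 - MvPowerSeries.X i : MvPowerSeries (Fin r) ℤ)) *
      ((MvPowerSeries.monomial d 1) * ind A)
    = (MvPowerSeries.monomial d 1) *
      ((∏ i ∈ T, (1 - MvPowerSeries.X i : MvPowerSeries (Fin r) ℤ)) * ind A) from by ring]
  rw [hP]


section ModulePart

variable {K : Type} [Field K] {r k : ℕ}
  {M : Type} [AddCommGroup M] [Module (MvPolynomial (Fin r) K) M]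
  [Module K M] [IsScalarTower K (MvPolynomial (Fin r) K) M]

variable (ℳ : (Fin r →₀ ℕ) → Submodule K M)

noncomputable def projL (hM : DirectSum.IsInternal ℳ) (u : Fin r →₀ ℕ) : M →ₗ[K] M :=
  (ℳ u).subtype ∘ₗ (DirectSum.component K (Fin r →₀ ℕ) (fun v => ↥(ℳ v)) u) ∘ₗ
    ((LinearEquiv.ofBijective (DirectSum.coeLinearMap ℳ) hM).symm : M →ₗ[K] _)

variable (hM : DirectSum.IsInternal ℳ)

lemma projL_mem (u : Fin r →₀ ℕ) (m : M) : projL ℳ hM u m ∈ ℳ u := by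
  exact ((LinearEquiv.ofBijective (DirectSum.coeLinearMap ℳ) hM).symm m u).2

lemma projL_same {u : Fin r →₀ ℕ} {m : M} (hm : m ∈ ℳ u) : projL ℳ hM u m = m := by
  have := hM.ofBijective_coeLinearMap_of_mem hm
  simp only [projL, LinearMap.coe_comp, Function.comp_apply, LinearEquiv.coe_coe]
  rw [← DirectSum.apply_eq_component, this]
  rfl

lemma projL_ne {u v : Fin r →₀ ℕ} {m : M} (hm : m ∈ ℳ v) (hne : v ≠ u) :
    projL ℳ hM u m = 0 := by
  have := hM.ofBijective_coeLinearMap_of_mem_ne hne hm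
  simp only [projL, LinearMap.coe_comp, Function.comp_apply, LinearEquiv.coe_coe]
  rw [← DirectSum.apply_eq_component, this]
  rfl

lemma sum_projL (m : M) : ∃ t : Finset (Fin r →₀ ℕ),
    (∀ w ∉ t, projL ℳ hM w m = 0) ∧ ∑ w ∈ t, projL ℳ hM w m = m := by
  classical
  set x := (LinearEquiv.ofBijective (DirectSum.coeLinearMap ℳ) hM).symm m with hx
  have hxw : ∀ w, projL ℳ hM w m = (x w : M) := fun w => rfl
  refine ⟨DFinsupp.support x, fun w hw => ?_, ?_⟩
  · rw [hxw, DFinsupp.notMem_support_iff.mp hw]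
    rfl
  · have hm : DirectSum.coeLinearMap ℳ x = m := by
      rw [hx]
      exact (LinearEquiv.ofBijective (DirectSum.coeLinearMap ℳ) hM).apply_symm_apply m
    calc ∑ w ∈ DFinsupp.support x, projL ℳ hM w m
        = ∑ w ∈ DFinsupp.support x, DirectSum.coeLinearMap ℳ
            (DirectSum.of (fun v => ↥(ℳ v)) w (x w)) := by
          refine Finset.sum_congr rfl fun w _ => ?_
          rw [DirectSum.coeLinearMap_of, hxw]
      _ = DirectSum.coeLinearMap ℳ (∑ w ∈ DFinsupp.support x,
            DirectSum.of (fun v => ↥(ℳ v)) w (x w)) := (map_sum _ _ _).symm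
      _ = m := by rw [DirectSum.sum_support_of x, hm]


def wtk (k : ℕ) (v : Fin r →₀ ℕ) : ℕ :=
  ∑ i ∈ Finset.univ.filter (fun i : Fin r => (i : ℕ) < k), v i

lemma wtk_add (k : ℕ) (v w : Fin r →₀ ℕ) : wtk k (v + w) = wtk k v + wtk k w := by
  rw [wtk, wtk, wtk, ← Finset.sum_add_distrib]
  exact Finset.sum_congr rfl fun i _ => Finsupp.add_apply v w i

lemma wtk_single {k : ℕ} {i : Fin r} (hi : (i : ℕ) < k) : wtk k (Finsupp.single i 1) = 1 := by
  rw [wtk]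
  have hterm : ∀ x ∈ Finset.univ.filter (fun j : Fin r => (j : ℕ) < k),
      (Finsupp.single i 1) x = if x = i then 1 else 0 := by
    intro x _
    rw [Finsupp.single_apply]
    by_cases h : x = i
    · rw [if_pos h, if_pos h.symm]
    · rw [if_neg h, if_neg (fun hc => h hc.symm)]
  rw [Finset.sum_congr rfl hterm, Finset.sum_ite_eq' _ i (fun _ => 1),
    if_pos (Finset.mem_filter.mpr ⟨Finset.mem_univ i, hi⟩)]

lemma apply_le_wtk {k : ℕ} {i : Fin r} (hi : (i : ℕ) < k) (v : Fin r →₀ ℕ) :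
    v i ≤ wtk k v :=
  Finset.single_le_sum (fun _ _ => Nat.zero_le _)
    (Finset.mem_filter.mpr ⟨Finset.mem_univ i, hi⟩)

noncomputable def Pk (K : Type) [Field K] (r k : ℕ) : Ideal (MvPolynomial (Fin r) K) :=
  Ideal.span {f | ∃ i : Fin r, (i : ℕ) < k ∧ f = MvPolynomial.X i}

lemma mem_Pk_wt {s : MvPolynomial (Fin r) K} (hs : s ∈ Pk K r k) :
    ∀ v ∈ s.support, 1 ≤ wtk k v := by
  classical
  refine Submodule.span_induction ?_ ?_ ?_ ?_ hs
  · rintro f ⟨i, hik, rfl⟩ v hv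
    rw [MvPolynomial.support_X] at hv
    rw [Finset.mem_singleton.mp hv, wtk_single hik]
  · intro v hv
    simp at hv
  · intro f g _ _ hf hg v hv
    rcases Finset.mem_union.mp (MvPolynomial.support_add hv) with h | h
    · exact hf v h
    · exact hg v h
  · intro a f _ hf v hv
    rw [smul_eq_mul] at hv
    obtain ⟨va, hva, vf, hvf, rfl⟩ := Finset.mem_add.mp (MvPolynomial.support_mul a f hv)
    calc 1 ≤ wtk k vf := hf vf hvf
    _ ≤ wtk k va + wtk k vf := Nat.le_add_left _ _
    _ = wtk k (va + vf) := (wtk_add k va vf).symm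

lemma mem_pow_Pk_wt {n : ℕ} {s : MvPolynomial (Fin r) K} (hs : s ∈ (Pk K r k) ^ n) :
    ∀ v ∈ s.support, n ≤ wtk k v := by
  classical
  induction n generalizing s with
  | zero => intro v _; exact Nat.zero_le _
  | succ n ih =>
      rw [pow_succ] at hs
      refine Submodule.mul_induction_on hs ?_ ?_
      · intro a ha b hb v hv
        obtain ⟨va, hva, vb, hvb, rfl⟩ := Finset.mem_add.mp (MvPolynomial.support_mul a b hv)
        have h1 := ih ha va hva
        have h2 := mem_Pk_wt hb vb hvb
        rw [wtk_add]
        omega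
      · intro f g hf hg v hv
        rcases Finset.mem_union.mp (MvPolynomial.support_add hv) with h | h
        · exact hf v h
        · exact hg v h

lemma wt_mem_pow_Pk {n : ℕ} {v : Fin r →₀ ℕ} (hv : n ≤ wtk k v) (c : K) :
    MvPolynomial.monomial v c ∈ (Pk K r k) ^ n := by
  induction n generalizing v with
  | zero => rw [pow_zero, Ideal.one_eq_top]; exact Submodule.mem_top
  | succ n ih =>
      have hpos : 0 < wtk k v := by omega
      have hex : ∃ i ∈ Finset.univ.filter (fun i : Fin r => (i : ℕ) < k), v i ≠ 0 := by
        by_contra hcon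
        push_neg at hcon
        have : wtk k v = 0 := Finset.sum_eq_zero hcon
        omega
      obtain ⟨i, hifil, hvi⟩ := hex
      have hik : (i : ℕ) < k := (Finset.mem_filter.mp hifil).2
      have hle : Finsupp.single i 1 ≤ v := Finsupp.single_le_iff.mpr (by omega)
      set w := v - Finsupp.single i 1 with hw
      have hvw : Finsupp.single i 1 + w = v := add_tsub_cancel_of_le hle
      have hwt : n ≤ wtk k w := by
        have := wtk_add k (Finsupp.single i 1) w
        rw [hvw, wtk_single hik] at this
        omega
      have heq : MvPolynomial.monomial v c
          = MvPolynomial.X i * MvPolynomial.monomial w c := by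
        rw [MvPolynomial.X, MvPolynomial.monomial_mul, one_mul, hvw]
      rw [heq, pow_succ']
      exact Ideal.mul_mem_mul (Ideal.subset_span ⟨i, hik, rfl⟩) (ih hwt)


lemma projL_poly_smul
    (hMgr : ∀ (u v : Fin r →₀ ℕ) (c : K) (m : M), m ∈ ℳ v →
      (MvPolynomial.monomial u c) • m ∈ ℳ (u + v))
    (f : MvPolynomial (Fin r) K) {g : M} {d : Fin r →₀ ℕ}
    (hg : g ∈ ℳ d) (u : Fin r →₀ ℕ) :
    projL ℳ hM u (f • g) = if d ≤ u
      then (MvPolynomial.monomial (u - d) (f.coeff (u - d))) • g else 0 := by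
  classical
  have hsplit : f • g = ∑ v ∈ f.support, (MvPolynomial.monomial v (f.coeff v)) • g := by
    rw [← Finset.sum_smul, MvPolynomial.support_sum_monomial_coeff]
  rw [hsplit, map_sum]
  have hterm : ∀ v ∈ f.support,
      projL ℳ hM u ((MvPolynomial.monomial v (f.coeff v)) • g)
      = if v + d = u then (MvPolynomial.monomial v (f.coeff v)) • g else 0 := by
    intro v _
    by_cases h : v + d = u
    · rw [if_pos h]
      exact projL_same ℳ hM (by rw [← h]; exact hMgr v d (f.coeff v) g hg)
    · rw [if_neg h, projL_ne ℳ hM (hMgr v d (f.coeff v) g hg) h]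
  rw [Finset.sum_congr rfl hterm]
  by_cases hle : d ≤ u
  · rw [if_pos hle]
    have hcond : ∀ v : Fin r →₀ ℕ, (v + d = u) ↔ (v = u - d) := by
      intro v
      constructor
      · intro h; rw [← h]; exact (add_tsub_cancel_right v d).symm
      · intro h; rw [h]; exact tsub_add_cancel_of_le hle
    rw [Finset.sum_congr rfl (fun v _ => by rw [if_congr (hcond v) rfl rfl]),
      Finset.sum_ite_eq' _ (u - d) (fun v => (MvPolynomial.monomial v (f.coeff v)) • g)]
    by_cases hmem : u - d ∈ f.support
    · rw [if_pos hmem]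
    · rw [if_neg hmem, MvPolynomial.notMem_support_iff.mp hmem,
        MvPolynomial.monomial_zero, zero_smul]
  · rw [if_neg hle]
    apply Finset.sum_eq_zero
    intro v _
    rw [if_neg (fun (h : v + d = u) => hle (le_of_le_of_eq (le_add_self : d ≤ v + d) h))]

lemma projL_monomial_smul
    (hMgr : ∀ (u v : Fin r →₀ ℕ) (c : K) (m : M), m ∈ ℳ v →
      (MvPolynomial.monomial u c) • m ∈ ℳ (u + v))
    (v : Fin r →₀ ℕ) (c : K) (u : Fin r →₀ ℕ) (m : M) :
    (MvPolynomial.monomial v c) • projL ℳ hM u m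
      = projL ℳ hM (v + u) ((MvPolynomial.monomial v c) • m) := by
  classical
  obtain ⟨t, hout, hsum⟩ := sum_projL ℳ hM m
  conv_rhs => rw [← hsum]
  rw [Finset.smul_sum, map_sum]
  have hterm : ∀ w ∈ t,
      projL ℳ hM (v + u) ((MvPolynomial.monomial v c) • projL ℳ hM w m)
      = if w = u then (MvPolynomial.monomial v c) • projL ℳ hM w m else 0 := by
    intro w _
    have hmem := hMgr v w c _ (projL_mem ℳ hM w m)
    by_cases h : w = u
    · rw [if_pos h, projL_same ℳ hM (by rw [h] at hmem ⊢; exact hmem)]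
    · rw [if_neg h, projL_ne ℳ hM hmem (fun hc => h (add_left_cancel hc))]
  rw [Finset.sum_congr rfl hterm, Finset.sum_ite_eq' t u
    (fun w => (MvPolynomial.monomial v c) • projL ℳ hM w m)]
  by_cases hmem : u ∈ t
  · rw [if_pos hmem]
  · rw [if_neg hmem, hout u hmem, smul_zero]


lemma projL_mem_H0
    (hMgr : ∀ (u v : Fin r →₀ ℕ) (c : K) (m : M), m ∈ ℳ v →
      (MvPolynomial.monomial u c) • m ∈ ℳ (u + v))
    (H0 : Submodule (MvPolynomial (Fin r) K) M)
    (hH0 : ∀ m : M, m ∈ H0 ↔ ∃ n : ℕ, ∀ s ∈ (Pk K r k) ^ n, s • m = 0)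
    {m : M} (hm : m ∈ H0) (u : Fin r →₀ ℕ) : projL ℳ hM u m ∈ H0 := by
  classical
  obtain ⟨n, hn⟩ := (hH0 m).mp hm
  refine (hH0 _).mpr ⟨n, fun s hs => ?_⟩
  have hsplit : s • projL ℳ hM u m
      = ∑ v ∈ s.support, (MvPolynomial.monomial v (s.coeff v)) • projL ℳ hM u m := by
    rw [← Finset.sum_smul, MvPolynomial.support_sum_monomial_coeff]
  rw [hsplit]
  apply Finset.sum_eq_zero
  intro v hv
  rw [projL_monomial_smul ℳ hM hMgr,
    hn _ (wt_mem_pow_Pk (mem_pow_Pk_wt hs v hv) (s.coeff v)), map_zero]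

noncomputable def xmonK (K : Type) [Field K] {r : ℕ} (w : Fin r →₀ ℕ) : MvPolynomial (Fin r) K :=
  MvPolynomial.monomial w 1

noncomputable def Qp (N : Submodule (MvPolynomial (Fin r) K) M) (u : Fin r →₀ ℕ) : Submodule K M :=
  (N.restrictScalars K) ⊓ ℳ u

def IsGr (N : Submodule (MvPolynomial (Fin r) K) M) : Prop :=
  ∀ (u : Fin r →₀ ℕ) (m : M), m ∈ N → projL ℳ hM u m ∈ N

lemma isGr_bot : IsGr ℳ hM (⊥ : Submodule (MvPolynomial (Fin r) K) M) := by
  intro u m hm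
  rw [Submodule.mem_bot] at hm
  rw [hm, map_zero]
  exact Submodule.zero_mem _

lemma isGr_sup
    (hMgr : ∀ (u v : Fin r →₀ ℕ) (c : K) (m : M), m ∈ ℳ v →
      (MvPolynomial.monomial u c) • m ∈ ℳ (u + v))
    {N : Submodule (MvPolynomial (Fin r) K) M} (hN : IsGr ℳ hM N)
    {g : M} {d : Fin r →₀ ℕ} (hg : g ∈ ℳ d) :
    IsGr ℳ hM (N ⊔ Submodule.span (MvPolynomial (Fin r) K) {g}) := by
  intro u m hm
  obtain ⟨y, hy, z, hz, rfl⟩ := Submodule.mem_sup.mp hm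
  obtain ⟨f, rfl⟩ := Submodule.mem_span_singleton.mp hz
  rw [map_add]
  apply Submodule.add_mem
  · exact Submodule.mem_sup_left (hN u y hy)
  · rw [projL_poly_smul ℳ hM hMgr f hg u]
    by_cases hle : d ≤ u
    · rw [if_pos hle]
      exact Submodule.mem_sup_right
        (Submodule.smul_mem _ _ (Submodule.mem_span_singleton_self g))
    · rw [if_neg hle]
      exact Submodule.zero_mem _

lemma piece_le
    (hMgr : ∀ (u v : Fin r →₀ ℕ) (c : K) (m : M), m ∈ ℳ v →
      (MvPolynomial.monomial u c) • m ∈ ℳ (u + v))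
    {N : Submodule (MvPolynomial (Fin r) K) M} (hN : IsGr ℳ hM N)
    {g : M} {d : Fin r →₀ ℕ} (hg : g ∈ ℳ d) {u : Fin r →₀ ℕ} (hle : d ≤ u) :
    Qp ℳ (N ⊔ Submodule.span (MvPolynomial (Fin r) K) {g}) u
      = Qp ℳ N u ⊔ Submodule.span K {(xmonK K (u - d)) • g} := by
  apply le_antisymm
  · intro m hm
    obtain ⟨hm1, hm2⟩ := hm
    obtain ⟨y, hy, z, hz, hyz⟩ := Submodule.mem_sup.mp hm1
    obtain ⟨f, rfl⟩ := Submodule.mem_span_singleton.mp hz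
    have hmp : m = projL ℳ hM u m := (projL_same ℳ hM hm2).symm
    have hexp : m = projL ℳ hM u y + (f.coeff (u - d)) • ((xmonK K (u - d)) • g) := by
      conv_lhs => rw [hmp, ← hyz]
      rw [map_add, projL_poly_smul ℳ hM hMgr f hg u, if_pos hle]
      congr 1
      rw [xmonK, ← smul_assoc, MvPolynomial.smul_monomial, smul_eq_mul, mul_one]
    rw [hexp]
    apply Submodule.add_mem
    · apply Submodule.mem_sup_left
      exact ⟨hN u y hy, projL_mem ℳ hM u y⟩
    · exact Submodule.mem_sup_right
        (Submodule.smul_mem _ _ (Submodule.mem_span_singleton_self _))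
  · apply sup_le
    · exact fun x hx => ⟨Submodule.mem_sup_left hx.1, hx.2⟩
    · rw [Submodule.span_le, Set.singleton_subset_iff]
      refine ⟨?_, ?_⟩
      · exact Submodule.mem_sup_right
          (Submodule.smul_mem _ _ (Submodule.mem_span_singleton_self g))
      · have := hMgr (u - d) d 1 g hg
        rwa [tsub_add_cancel_of_le hle] at this

lemma piece_not_le
    {N : Submodule (MvPolynomial (Fin r) K) M} (hN : IsGr ℳ hM N)
    {g : M} {d : Fin r →₀ ℕ} (hg : g ∈ ℳ d) {u : Fin r →₀ ℕ} (hle : ¬ d ≤ u)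
    (hMgr : ∀ (u v : Fin r →₀ ℕ) (c : K) (m : M), m ∈ ℳ v →
      (MvPolynomial.monomial u c) • m ∈ ℳ (u + v)) :
    Qp ℳ (N ⊔ Submodule.span (MvPolynomial (Fin r) K) {g}) u = Qp ℳ N u := by
  apply le_antisymm
  · intro m hm
    obtain ⟨hm1, hm2⟩ := hm
    obtain ⟨y, hy, z, hz, hyz⟩ := Submodule.mem_sup.mp hm1
    obtain ⟨f, rfl⟩ := Submodule.mem_span_singleton.mp hz
    have hmp : m = projL ℳ hM u m := (projL_same ℳ hM hm2).symm
    have hexp : m = projL ℳ hM u y := by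
      conv_lhs => rw [hmp, ← hyz]
      rw [map_add, projL_poly_smul ℳ hM hMgr f hg u, if_neg hle, add_zero]
    rw [hexp]
    exact ⟨hN u y hy, projL_mem ℳ hM u y⟩
  · exact fun x hx => ⟨Submodule.mem_sup_left hx.1, hx.2⟩


lemma finrank_step
    (hMgr : ∀ (u v : Fin r →₀ ℕ) (c : K) (m : M), m ∈ ℳ v →
      (MvPolynomial.monomial u c) • m ∈ ℳ (u + v))
    {N : Submodule (MvPolynomial (Fin r) K) M} (hN : IsGr ℳ hM N)
    {g : M} {d : Fin r →₀ ℕ} (hg : g ∈ ℳ d) (u : Fin r →₀ ℕ)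
    (hfd : FiniteDimensional K (Qp ℳ N u)) :
    FiniteDimensional K (Qp ℳ (N ⊔ Submodule.span (MvPolynomial (Fin r) K) {g}) u) ∧
    (Module.finrank K (Qp ℳ (N ⊔ Submodule.span (MvPolynomial (Fin r) K) {g}) u) : ℤ)
      = (Module.finrank K (Qp ℳ N u) : ℤ)
        + (if d ≤ u ∧ (xmonK K (u - d)) • g ∉ N then 1 else 0) := by
  classical
  by_cases hle : d ≤ u
  · set x := (xmonK K (u - d)) • g with hx
    have hxu : x ∈ ℳ u := by
      have := hMgr (u - d) d 1 g hg
      rwa [tsub_add_cancel_of_le hle] at this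
    rw [piece_le ℳ hM hMgr hN hg hle]
    by_cases hxN : x ∈ N
    · have hsub : Submodule.span K {x} ≤ Qp ℳ N u := by
        rw [Submodule.span_le, Set.singleton_subset_iff]
        exact ⟨hxN, hxu⟩
      rw [sup_eq_left.mpr hsub, if_neg (fun hc => hc.2 hxN), add_zero]
      exact ⟨hfd, rfl⟩
    · have hx0 : x ≠ 0 := fun h => hxN (h ▸ N.zero_mem)
      have hxQ : x ∉ Qp ℳ N u := fun h => hxN h.1
      haveI := hfd
      have hdisj : Qp ℳ N u ⊓ Submodule.span K {x} = ⊥ := by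
        rw [eq_bot_iff]
        rintro y ⟨hy1, hy2⟩
        obtain ⟨c, rfl⟩ := Submodule.mem_span_singleton.mp hy2
        by_cases hc : c = 0
        · rw [hc, zero_smul]; exact Submodule.zero_mem ⊥
        · exfalso
          apply hxQ
          have : x = c⁻¹ • (c • x) := by rw [← mul_smul, inv_mul_cancel₀ hc, one_smul]
          rw [this]
          exact Submodule.smul_mem _ _ hy1
      have hrank := Submodule.finrank_sup_add_finrank_inf_eq (Qp ℳ N u)
        (Submodule.span K {x})
      rw [hdisj, finrank_bot, add_zero, finrank_span_singleton hx0] at hrank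
      refine ⟨Submodule.finiteDimensional_sup _ _, ?_⟩
      rw [if_pos ⟨hle, hxN⟩, hrank]
      push_cast
      ring
  · rw [piece_not_le ℳ hM hN hg hle hMgr, if_neg (fun hc => hle hc.1), add_zero]
    exact ⟨hfd, rfl⟩

variable (K M) in
noncomputable def NLf : List ((Fin r →₀ ℕ) × M) → Submodule (MvPolynomial (Fin r) K) M
  | [] => ⊥
  | a :: L => NLf L ⊔ Submodule.span (MvPolynomial (Fin r) K) {a.2}

variable (K M) in
noncomputable def cnt : List ((Fin r →₀ ℕ) × M) → (Fin r →₀ ℕ) → ℤ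
  | [], _ => 0
  | a :: L, u => cnt L u
      + (if a.1 ≤ u ∧ (xmonK K (u - a.1)) • a.2 ∉ NLf K M L then 1 else 0)

variable (K M) in
noncomputable def serCnt (L : List ((Fin r →₀ ℕ) × M)) : MvPowerSeries (Fin r) ℤ :=
  fun u => cnt K M L u

lemma isGr_NLf (L : List ((Fin r →₀ ℕ) × M)) (hhom : ∀ a ∈ L, a.2 ∈ ℳ a.1)
    (hMgr : ∀ (u v : Fin r →₀ ℕ) (c : K) (m : M), m ∈ ℳ v →
      (MvPolynomial.monomial u c) • m ∈ ℳ (u + v)) :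
    IsGr ℳ hM (NLf K M L) := by
  induction L with
  | nil => exact isGr_bot ℳ hM
  | cons a L ih =>
      exact isGr_sup ℳ hM hMgr
        (ih (fun b hb => hhom b (List.mem_cons_of_mem a hb)))
        (hhom a (List.mem_cons_self))

include hM in
lemma finrank_NLf (L : List ((Fin r →₀ ℕ) × M)) (hhom : ∀ a ∈ L, a.2 ∈ ℳ a.1)
    (hMgr : ∀ (u v : Fin r →₀ ℕ) (c : K) (m : M), m ∈ ℳ v →
      (MvPolynomial.monomial u c) • m ∈ ℳ (u + v)) (u : Fin r →₀ ℕ) :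
    FiniteDimensional K (Qp ℳ (NLf K M L) u) ∧
    (Module.finrank K (Qp ℳ (NLf K M L) u) : ℤ) = cnt K M L u := by
  induction L with
  | nil =>
      have hbot : Qp ℳ (NLf K M ([] : List ((Fin r →₀ ℕ) × M))) u = ⊥ := by
        rw [eq_bot_iff]
        intro x hx
        exact hx.1
      rw [hbot]
      constructor
      · infer_instance
      · rw [finrank_bot]
        show ((0 : ℕ) : ℤ) = cnt K M [] u
        rw [Nat.cast_zero]
        rfl
  | cons a L ih =>
      obtain ⟨hfd, heq⟩ := ih (fun b hb => hhom b (List.mem_cons_of_mem a hb))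
      obtain ⟨hfd2, heq2⟩ := finrank_step ℳ hM hMgr
        (isGr_NLf ℳ hM L (fun b hb => hhom b (List.mem_cons_of_mem a hb)) hMgr)
        (hhom a (List.mem_cons_self)) u hfd
      refine ⟨hfd2, ?_⟩
      rw [show NLf K M (a :: L) = NLf K M L ⊔
        Submodule.span (MvPolynomial (Fin r) K) {a.2} from rfl, heq2, heq]
      rfl

lemma NLf_le (N : Submodule (MvPolynomial (Fin r) K) M) (L : List ((Fin r →₀ ℕ) × M))
    (h : ∀ a ∈ L, a.2 ∈ N) : NLf K M L ≤ N := by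
  induction L with
  | nil => exact bot_le
  | cons a L ih =>
      apply sup_le (ih (fun b hb => h b (List.mem_cons_of_mem a hb)))
      rw [Submodule.span_le, Set.singleton_subset_iff]
      exact h a (List.mem_cons_self)

lemma mem_NLf {L : List ((Fin r →₀ ℕ) × M)} {a : (Fin r →₀ ℕ) × M} (ha : a ∈ L) :
    a.2 ∈ NLf K M L := by
  induction L with
  | nil => exact absurd ha (List.not_mem_nil)
  | cons b L ih =>
      rcases List.mem_cons.mp ha with h | h
      · exact Submodule.mem_sup_right (h ▸ Submodule.mem_span_singleton_self _)
      · exact Submodule.mem_sup_left (ih h)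

lemma cnt_poly (L : List ((Fin r →₀ ℕ) × M))
    (hann : ∀ a ∈ L, ∃ n : ℕ, ∀ s ∈ (Pk K r k) ^ n, s • a.2 = 0) :
    ∃ P : MvPolynomial (Fin r) ℤ,
      (∏ i ∈ Finset.univ.filter (fun i : Fin r => k ≤ (i : ℕ)),
        (1 - MvPowerSeries.X i)) * serCnt K M L = ↑P := by
  classical
  induction L with
  | nil =>
      refine ⟨0, ?_⟩
      have h0 : serCnt K M ([] : List ((Fin r →₀ ℕ) × M)) = 0 := by
        funext u
        rfl
      rw [h0, mul_zero]
      exact MvPolynomial.coe_zero.symm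
  | cons a L ih =>
      obtain ⟨P1, hP1⟩ := ih (fun b hb => hann b (List.mem_cons_of_mem a hb))
      set A : Set (Fin r →₀ ℕ) := {w | (xmonK K w) • a.2 ∉ NLf K M L} with hA
      have hdc : ∀ v ∈ A, ∀ w ≤ v, w ∈ A := by
        intro v hv w hw
        rw [hA, Set.mem_setOf_eq] at hv ⊢
        intro hc
        apply hv
        have hmul : (xmonK K v) • a.2
            = (MvPolynomial.monomial (v - w) (1 : K)) • ((xmonK K w) • a.2) := by
          rw [← mul_smul, xmonK, xmonK, MvPolynomial.monomial_mul, one_mul,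
            tsub_add_cancel_of_le hw]
        rw [hmul]
        exact Submodule.smul_mem _ _ hc
      obtain ⟨n, hn⟩ := hann a (List.mem_cons_self)
      have hbd : ∀ v ∈ A, ∀ i ∉ Finset.univ.filter (fun i : Fin r => k ≤ (i : ℕ)),
          v i < n := by
        intro v hv i hi
        by_contra hcon
        push_neg at hcon
        have hik : (i : ℕ) < k := by
          simp only [Finset.mem_filter, Finset.mem_univ, true_and, not_le] at hi
          exact hi
        have hwt : n ≤ wtk k v := le_trans hcon (apply_le_wtk hik v)
        have hz : (xmonK K v) • a.2 = 0 := hn _ (wt_mem_pow_Pk hwt 1)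
        exact hv (hz ▸ Submodule.zero_mem _)
      obtain ⟨P2, hP2⟩ := comb_shift
        (Finset.univ.filter (fun i : Fin r => k ≤ (i : ℕ))) A hdc n hbd a.1
      refine ⟨P1 + P2, ?_⟩
      have hsplit : serCnt K M (a :: L)
          = serCnt K M L + ind {u | a.1 ≤ u ∧ u - a.1 ∈ A} := by
        apply MvPowerSeries.ext
        intro u
        rw [map_add]
        have h1 : MvPowerSeries.coeff u (serCnt K M (a :: L)) = cnt K M (a :: L) u := rfl
        have h2 : MvPowerSeries.coeff u (serCnt K M L) = cnt K M L u := rfl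
        rw [h1, h2, coeff_ind]
        show cnt K M L u + _ = cnt K M L u + _
        congr 1
        by_cases hc : a.1 ≤ u ∧ (xmonK K (u - a.1)) • a.2 ∉ NLf K M L
        · rw [if_pos hc, if_pos (by exact ⟨hc.1, hc.2⟩)]
        · rw [if_neg hc, if_neg (by exact fun hh => hc ⟨hh.1, hh.2⟩)]
      rw [hsplit, mul_add, hP1, hP2, MvPolynomial.coe_add]

end ModulePart

end St12

theorem statement12 (K : Type) [Field K] (r k : ℕ)
    (M : Type) [AddCommGroup M] [Module (MvPolynomial (Fin r) K) M]
    [Module K M] [IsScalarTower K (MvPolynomial (Fin r) K) M]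
    [Module.Finite (MvPolynomial (Fin r) K) M]
    (ℳ : (Fin r →₀ ℕ) → Submodule K M)
    (hM : DirectSum.IsInternal ℳ)
    (hMgr : ∀ (u v : Fin r →₀ ℕ) (c : K) (m : M), m ∈ ℳ v →
      (MvPolynomial.monomial u c) • m ∈ ℳ (u + v))
    -- p = ⟨x_1,…,x_k⟩ is an associated prime of M
    (p : Ideal (MvPolynomial (Fin r) K))
    (hpdef : p = Ideal.span {f | ∃ i : Fin r, (i : ℕ) < k ∧ f = MvPolynomial.X i})
    (hp : p.IsPrime)
    (hass : ∃ m : M, ∀ s : MvPolynomial (Fin r) K, s ∈ p ↔ s • m = 0)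
    -- H0 is the zeroth local cohomology H^0_p(M)
    (H0 : Submodule (MvPolynomial (Fin r) K) M)
    (hH0 : ∀ m : M, m ∈ H0 ↔ ∃ n : ℕ, ∀ s ∈ p ^ n, s • m = 0)
    -- `HS` is the multigraded Hilbert series of `H^0_p(M)`
    (HS : MvPowerSeries (Fin r) ℤ)
    (hHS : ∀ u : Fin r →₀ ℕ, MvPowerSeries.coeff u HS =
      (Module.finrank K ↥(Submodule.restrictScalars K H0 ⊓ ℳ u) : ℤ)) :
    ∃ P : MvPolynomial (Fin r) ℤ,
      (∏ i ∈ Finset.univ.filter (fun i : Fin r => k ≤ (i : ℕ)),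
        (1 - MvPowerSeries.X i)) * HS = ↑P := by
  classical
  have hH0P : ∀ m : M, m ∈ H0 ↔ ∃ n : ℕ, ∀ s ∈ (St12.Pk K r k) ^ n, s • m = 0 := by
    have hh := hH0
    rw [hpdef] at hh
    exact hh
  haveI : IsNoetherian (MvPolynomial (Fin r) K) M :=
    isNoetherian_of_isNoetherianRing_of_finite _ _
  obtain ⟨F, hF⟩ := IsNoetherian.noetherian H0
  choose tf ht1 ht2 using St12.sum_projL ℳ hM
  set L : List ((Fin r →₀ ℕ) × M) :=
    F.toList.flatMap (fun h => (tf h).toList.map (fun w => (w, St12.projL ℳ hM w h)))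
    with hL
  have hmemL : ∀ a ∈ L, ∃ h ∈ F, ∃ w, a = (w, St12.projL ℳ hM w h) := by
    intro a ha
    rw [hL, List.mem_flatMap] at ha
    obtain ⟨h, hh, ha2⟩ := ha
    rw [List.mem_map] at ha2
    obtain ⟨w, hw, rfl⟩ := ha2
    exact ⟨h, Finset.mem_toList.mp hh, w, rfl⟩
  have hFH0 : ∀ h ∈ F, h ∈ H0 := fun h hh =>
    hF ▸ Submodule.subset_span (Finset.mem_coe.mpr hh)
  have hhom : ∀ a ∈ L, a.2 ∈ ℳ a.1 := by
    intro a ha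
    obtain ⟨h, _, w, rfl⟩ := hmemL a ha
    exact St12.projL_mem ℳ hM w h
  have haH0 : ∀ a ∈ L, a.2 ∈ H0 := by
    intro a ha
    obtain ⟨h, hh, w, rfl⟩ := hmemL a ha
    exact St12.projL_mem_H0 ℳ hM hMgr H0 hH0P (hFH0 h hh) w
  have hann : ∀ a ∈ L, ∃ n : ℕ, ∀ s ∈ (St12.Pk K r k) ^ n, s • a.2 = 0 :=
    fun a ha => (hH0P a.2).mp (haH0 a ha)
  have hNL : St12.NLf K M L = H0 := by
    apply le_antisymm
    · exact St12.NLf_le H0 L haH0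
    · rw [← hF, Submodule.span_le]
      intro h hh
      rw [Finset.mem_coe] at hh
      rw [← ht2 h]
      apply Submodule.sum_mem
      intro w hw
      have hmem : ((w, St12.projL ℳ hM w h) : (Fin r →₀ ℕ) × M) ∈ L := by
        rw [hL, List.mem_flatMap]
        exact ⟨h, Finset.mem_toList.mpr hh,
          List.mem_map.mpr ⟨w, Finset.mem_toList.mpr hw, rfl⟩⟩
      exact St12.mem_NLf hmem
  have hHS_eq : HS = St12.serCnt K M L := by
    apply MvPowerSeries.ext
    intro u
    rw [hHS u]
    rw [show (Submodule.restrictScalars K H0 ⊓ ℳ u) = St12.Qp ℳ H0 u from rfl]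
    rw [← hNL]
    exact (St12.finrank_NLf ℳ hM L hhom hMgr u).2
  rw [hHS_eq]
  exact St12.cnt_poly L hann
end

section
/- Let M be a finitely generated ℕ^r-graded module over S = K[x_1,…,x_r] and let p = ⟨x_1,…,x_k⟩ with 0 < k < r be an associated prime of M. View M as a module over S_{c_p} = K[x_{k+1},…,x_r] by restriction of scalars, and let N be the S_{c_p}-submodule of M generated by {a ∈ M | √(Ann_S(a)) = p}. Then rk_{S_{c_p}}(N) = rk_{S_{c_p}}(H^0_p(M)). -/
set_option synthInstance.maxHeartbeats 1000000
set_option maxHeartbeats 1000000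

section AuxPhi
open MvPolynomial
noncomputable def statement13.phi (K : Type) [Field K] (r k : ℕ) :
    MvPolynomial (Fin r) K →ₐ[K] MvPolynomial (Fin r) K :=
  aeval (fun i => if (i : ℕ) < k then 0 else X i)

namespace statement13
variable {K : Type} [Field K] {r k : ℕ}

lemma phi_sub_mem (f : MvPolynomial (Fin r) K) :
    f - phi K r k f ∈ Ideal.span {f | ∃ i : Fin r, (i : ℕ) < k ∧ f = MvPolynomial.X i} := by
  set p := Ideal.span {f : MvPolynomial (Fin r) K | ∃ i : Fin r, (i : ℕ) < k ∧ f = X i} with hp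
  induction f using MvPolynomial.induction_on with
  | C a => simp [phi]
  | add f g hf hg =>
      have : f + g - phi K r k (f + g) = (f - phi K r k f) + (g - phi K r k g) := by
        rw [map_add]; ring
      rw [this]; exact add_mem hf hg
  | mul_X f i hf =>
      have hXi : X i - phi K r k (X i) ∈ p := by
        simp only [phi, aeval_X]
        by_cases h : (i : ℕ) < k
        · simp only [h, if_pos]
          rw [sub_zero]
          exact Ideal.subset_span ⟨i, h, rfl⟩
        · simp [h]
      have : f * X i - phi K r k (f * X i) =
          f * (X i - phi K r k (X i)) + (f - phi K r k f) * phi K r k (X i) := by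
        rw [map_mul]; ring
      rw [this]
      exact add_mem (Ideal.mul_mem_left _ _ hXi) (Ideal.mul_mem_right _ _ hf)

lemma phi_mem_adjoin (f : MvPolynomial (Fin r) K) :
    phi K r k f ∈ Algebra.adjoin K
      {f : MvPolynomial (Fin r) K | ∃ i : Fin r, k ≤ (i : ℕ) ∧ f = MvPolynomial.X i} := by
  induction f using MvPolynomial.induction_on with
  | C a => simp only [phi, aeval_C]; exact Subalgebra.algebraMap_mem _ a
  | add f g hf hg => rw [map_add]; exact add_mem hf hg
  | mul_X f i hf =>
      rw [map_mul]
      refine mul_mem hf ?_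
      simp only [phi, aeval_X]
      by_cases h : (i : ℕ) < k
      · simp only [h, if_pos]; exact zero_mem _
      · simp only [h, if_neg, if_false]
        exact Algebra.subset_adjoin ⟨i, le_of_not_gt h, rfl⟩

lemma phi_fix {s : MvPolynomial (Fin r) K}
    (hs : s ∈ Algebra.adjoin K
      {f : MvPolynomial (Fin r) K | ∃ i : Fin r, k ≤ (i : ℕ) ∧ f = MvPolynomial.X i}) :
    phi K r k s = s := by
  have : Algebra.adjoin K
      {f : MvPolynomial (Fin r) K | ∃ i : Fin r, k ≤ (i : ℕ) ∧ f = MvPolynomial.X i}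
      ≤ AlgHom.equalizer (phi K r k) (AlgHom.id K _) := by
    rw [Algebra.adjoin_le_iff]
    rintro f ⟨i, hi, rfl⟩
    show phi K r k (X i) = X i
    simp [phi, Nat.not_lt_of_le hi]
  exact this hs

lemma phi_ker {s : MvPolynomial (Fin r) K}
    (hs : s ∈ Ideal.span {f | ∃ i : Fin r, (i : ℕ) < k ∧ f = MvPolynomial.X i}) :
    phi K r k s = 0 := by
  have : Ideal.span {f | ∃ i : Fin r, (i : ℕ) < k ∧ f = MvPolynomial.X i}
      ≤ RingHom.ker (phi K r k).toRingHom := by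
    rw [Ideal.span_le]
    rintro f ⟨i, hi, rfl⟩
    have : phi K r k (X i) = 0 := by simp [phi, hi]
    exact this
  exact this hs

end statement13
end AuxPhi

/-- The rank of a module `M` over an integral domain `R`:
`rk_R(M) = dim_Q (M ⊗_R Q)` where `Q` is the fraction field of `R`. -/
noncomputable def rk (R : Type) [CommRing R] (M : Type) [AddCommGroup M] [Module R M] : ℕ :=
  Module.finrank (FractionRing R) (TensorProduct R (FractionRing R) M)

/-!
STATEMENT 13: Let `M` be a finitely generated ℕ^r-graded module over `S = K[x_1,…,x_r]`
and let `p = ⟨x_1,…,x_k⟩` with `0 < k < r` be an associated prime of `M`.  View `M` as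
a module over the subring `S_{c_p} = K[x_{k+1},…,x_r]` (the `K`-subalgebra of `S`
generated by the variables `x_i` with `i ≥ k`) by restriction of scalars, and let `N`
be the `S_{c_p}`-submodule of `M` generated by `{a ∈ M | √(Ann_S(a)) = p}`.
Then `rk_{S_{c_p}}(N) = rk_{S_{c_p}}(H^0_p(M))`.
-/

theorem statement13.rk_eq_of_le_of_torsion {R : Type} [CommRing R] [IsDomain R] {M : Type}
    [AddCommGroup M] [Module R M] {N1 N2 : Submodule R M} (hle : N1 ≤ N2)
    (htor : ∀ m : M, m ∈ N2 → ∃ s : R, s ≠ 0 ∧ s • m ∈ N1) :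
    rk R ↥N1 = rk R ↥N2 := by
  set Q := FractionRing R with hQ
  set ι : N1 →ₗ[R] N2 := Submodule.inclusion hle with hι
  have hinj : Function.Injective ⇑(ι.baseChange Q) := by
    have h1 : Function.Injective ⇑ι := Submodule.inclusion_injective hle
    have h2 : ⇑(ι.baseChange Q) = ⇑(LinearMap.lTensor Q ι) :=
      LinearMap.baseChange_eq_ltensor (A := Q) (f := ι)
    rw [h2]
    exact Module.Flat.lTensor_preserves_injective_linearMap (M := Q) ι h1
  have hsurj : Function.Surjective ⇑(ι.baseChange Q) := by
    intro z
    induction z using TensorProduct.induction_on with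
    | zero => exact ⟨0, map_zero _⟩
    | tmul q h =>
        obtain ⟨s, hs0, hsm⟩ := htor (h : M) h.2
        have hc : algebraMap R Q s ≠ 0 := fun hc0 =>
          hs0 (IsFractionRing.injective R Q (by rw [hc0, map_zero]))
        set c : Q := algebraMap R Q s with hcdef
        refine ⟨(q * c⁻¹) ⊗ₜ[R] (⟨s • (h : M), hsm⟩ : N1), ?_⟩
        rw [LinearMap.baseChange_tmul]
        have hιnn : ι ⟨s • (h : M), hsm⟩ = s • h := Subtype.ext rfl
        rw [hιnn]
        have hq : q = s • (q * c⁻¹) := by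
          rw [Algebra.smul_def, ← hcdef, mul_comm q, ← mul_assoc,
            mul_inv_cancel₀ hc, one_mul]
        calc (q * c⁻¹) ⊗ₜ[R] (s • h) = (s • (q * c⁻¹)) ⊗ₜ[R] h :=
              (TensorProduct.smul_tmul s (q * c⁻¹) h).symm
          _ = q ⊗ₜ[R] h := by rw [← hq]
    | add x y hx hy =>
        obtain ⟨a, ha⟩ := hx
        obtain ⟨b, hb⟩ := hy
        exact ⟨a + b, by rw [map_add, ha, hb]⟩
  have e := LinearEquiv.ofBijective (ι.baseChange Q) ⟨hinj, hsurj⟩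
  exact e.finrank_eq

theorem statement13 (K : Type) [Field K] (r k : ℕ) (hk0 : 0 < k) (hkr : k < r)
    (M : Type) [AddCommGroup M] [Module (MvPolynomial (Fin r) K) M]
    [Module K M] [IsScalarTower K (MvPolynomial (Fin r) K) M]
    [Module.Finite (MvPolynomial (Fin r) K) M]
    (ℳ : (Fin r →₀ ℕ) → Submodule K M)
    (hM : DirectSum.IsInternal ℳ)
    (hMgr : ∀ (u v : Fin r →₀ ℕ) (c : K) (m : M), m ∈ ℳ v →
      (MvPolynomial.monomial u c) • m ∈ ℳ (u + v))
    -- p = ⟨x_1,…,x_k⟩ is an associated prime of M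
    (p : Ideal (MvPolynomial (Fin r) K))
    (hpdef : p = Ideal.span {f | ∃ i : Fin r, (i : ℕ) < k ∧ f = MvPolynomial.X i})
    (hp : p.IsPrime)
    (hass : ∃ m : M, ∀ s : MvPolynomial (Fin r) K, s ∈ p ↔ s • m = 0)
    -- the subring S_{c_p} = K[x_{k+1},…,x_r]
    (Scp : Subalgebra K (MvPolynomial (Fin r) K))
    (hScp : Scp = Algebra.adjoin K
      {f : MvPolynomial (Fin r) K | ∃ i : Fin r, k ≤ (i : ℕ) ∧ f = MvPolynomial.X i})
    -- H0 is the zeroth local cohomology H^0_p(M)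
    (H0 : Submodule (MvPolynomial (Fin r) K) M)
    (hH0 : ∀ m : M, m ∈ H0 ↔ ∃ n : ℕ, ∀ s ∈ p ^ n, s • m = 0) :
    rk Scp ↥(Submodule.span Scp
        {a : M | ∃ I : Ideal (MvPolynomial (Fin r) K),
          (∀ s : MvPolynomial (Fin r) K, s ∈ I ↔ s • a = 0) ∧ I.radical = p}) =
      rk Scp ↥(Submodule.restrictScalars Scp H0) := by
  classical
  set S := MvPolynomial (Fin r) K
  set Aset : Set M := {a : M | ∃ I : Ideal S,
      (∀ s : S, s ∈ I ↔ s • a = 0) ∧ I.radical = p} with hAset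
  set NN : Submodule Scp M := Submodule.span Scp Aset with hNN
  -- basic facts about Scp and p
  have hpScp0 : ∀ s : S, s ∈ Scp → s ∈ p → s = 0 := by
    intro s hs hsp
    have h1 : statement13.phi K r k s = s := statement13.phi_fix (hScp ▸ hs)
    have h2 : statement13.phi K r k s = 0 := statement13.phi_ker (hpdef ▸ hsp)
    rw [h1] at h2; exact h2
  have hbig : ∀ q : Ideal S, p ≤ q → p ≠ q → ∃ t : S, t ∈ Scp ∧ t ≠ 0 ∧ t ∈ q := by
    intro q hpq hne
    obtain ⟨f, hfq, hfp⟩ : ∃ f, f ∈ q ∧ f ∉ p := by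
      by_contra h
      push_neg at h
      exact hne (le_antisymm hpq h)
    refine ⟨statement13.phi K r k f, hScp ▸ statement13.phi_mem_adjoin f, ?_, ?_⟩
    · intro h0
      apply hfp
      have h := hpdef ▸ statement13.phi_sub_mem (k := k) f
      rw [h0, sub_zero] at h
      exact h
    · have hsub : f - statement13.phi K r k f ∈ q := hpq (hpdef ▸ statement13.phi_sub_mem (k := k) f)
      have : statement13.phi K r k f = f - (f - statement13.phi K r k f) := by ring
      rw [this]
      exact sub_mem hfq hsub
  -- p is finitely generated
  have hpfg : p.FG := by
    rw [hpdef]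
    apply Submodule.fg_span
    apply Set.Finite.subset (Set.finite_range (MvPolynomial.X : Fin r → S))
    rintro f ⟨i, _, rfl⟩
    exact Set.mem_range_self i
  -- N ⊆ H0
  have hNle : NN ≤ Submodule.restrictScalars Scp H0 := by
    rw [hNN, Submodule.span_le]
    rintro a ⟨I, hI, hrad⟩
    show a ∈ H0
    rw [hH0]
    obtain ⟨n, hn⟩ := Ideal.exists_pow_le_of_le_radical_of_fg hrad.ge hpfg
    exact ⟨n, fun s hs => (hI s).1 (hn hs)⟩
  -- key torsion lemma
  have hkey : ∀ m : M, m ∈ H0 → ∃ s : Scp, s ≠ 0 ∧ (s : S) • m ∈ NN := by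
    intro m hm
    obtain ⟨n, hn⟩ := (hH0 m).1 hm
    set I : Ideal S := (Submodule.span S {m}).annihilator with hIdef
    have hI : ∀ t : S, t ∈ I ↔ t • m = 0 := fun t =>
      Submodule.mem_annihilator_span_singleton m t
    have hpn : p ^ n ≤ I := fun t ht => (hI t).2 (hn t ht)
    obtain ⟨c, hcinf, hcprim⟩ : ∃ c : Finset (Ideal S), c.inf id = I ∧ ∀ ⦃J : Ideal S⦄, J ∈ c → J.IsPrimary :=
      Submodule.isLasker S S I
    have hIle : ∀ Q ∈ c, I ≤ Q := by
      intro Q hQ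
      rw [← hcinf]
      exact Finset.inf_le hQ
    have hpQ : ∀ Q ∈ c, p ≤ Q.radical := by
      intro Q hQ x hx
      exact ⟨n, hIle Q hQ (hpn (Ideal.pow_mem_pow hx n))⟩
    set bad : Finset (Ideal S) := c.filter (fun Q => Q.radical ≠ p) with hbad
    set good : Finset (Ideal S) := c.filter (fun Q => Q.radical = p) with hgood
    have hgoodmem : ∀ Q ∈ good, Q ∈ c ∧ Q.radical = p := by
      intro Q hQ
      rw [hgood, Finset.mem_filter] at hQ
      exact hQ
    -- choose elements of Scp in the radicals of bad components
    have hchoice : ∀ Q ∈ bad, ∃ t : S, t ∈ Scp ∧ t ≠ 0 ∧ t ∈ Q.radical := by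
      intro Q hQ
      rw [hbad, Finset.mem_filter] at hQ
      exact hbig Q.radical (hpQ Q hQ.1) (Ne.symm hQ.2)
    choose t ht1 ht2 ht3 using hchoice
    set s₀ : S := ∏ Q ∈ bad.attach, t Q.1 Q.2 with hs₀
    have hs₀Scp : s₀ ∈ Scp := Subalgebra.prod_mem _ (fun Q _ => ht1 Q.1 Q.2)
    have hs₀0 : s₀ ≠ 0 := by
      rw [hs₀, Finset.prod_ne_zero_iff]
      exact fun Q _ => ht2 Q.1 Q.2
    have hs₀rad : ∀ Q ∈ bad, s₀ ∈ Q.radical := by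
      intro Q hQ
      have hdvd : t Q hQ ∣ s₀ := Finset.dvd_prod_of_mem _ (Finset.mem_attach bad ⟨Q, hQ⟩)
      obtain ⟨u, hu⟩ := hdvd
      rw [hu]
      exact Ideal.mul_mem_right _ _ (ht3 Q hQ)
    -- choose a uniform power landing in all bad components
    have hpow : ∀ Q ∈ bad, ∃ j : ℕ, s₀ ^ j ∈ Q := fun Q hQ => hs₀rad Q hQ
    choose j hj using hpow
    set N₀ : ℕ := bad.attach.sup (fun Q => j Q.1 Q.2) + 1 with hN₀
    set s : S := s₀ ^ N₀ with hs
    have hsbad : ∀ Q ∈ bad, s ∈ Q := by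
      intro Q hQ
      have hle : j Q hQ ≤ N₀ := by
        rw [hN₀]
        exact le_trans (Finset.le_sup (f := fun Q : {x // x ∈ bad} => j Q.1 Q.2)
          (Finset.mem_attach bad ⟨Q, hQ⟩)) (Nat.le_succ _)
      rw [hs, ← pow_sub_mul_pow s₀ hle]
      exact Ideal.mul_mem_left _ _ (hj Q hQ)
    have hsScp : s ∈ Scp := by rw [hs]; exact pow_mem hs₀Scp N₀
    have hs0 : s ≠ 0 := by rw [hs]; exact pow_ne_zero _ hs₀0
    have hsp : s ∉ p := fun hsmem => hs0 (hpScp0 s hsScp hsmem)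
    -- the annihilator of s • m
    set J : Ideal S := (Submodule.span S {s • m}).annihilator with hJdef
    have hJ : ∀ t : S, t ∈ J ↔ t • (s • m) = 0 := fun t =>
      Submodule.mem_annihilator_span_singleton _ t
    have hJeq : J = good.inf id := by
      ext x
      rw [hJ, smul_smul, ← hI, ← hcinf]
      simp only [Submodule.mem_finsetInf, id_eq]
      constructor
      · intro h Q hQ
        obtain ⟨hQc, hQr⟩ := hgoodmem Q hQ
        have hprimary := hcprim hQc
        rcases (Ideal.isPrimary_iff.1 hprimary).2 (h Q hQc) with h1 | h2
        · exact h1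
        · exact absurd (hQr ▸ h2) hsp
      · intro h Q hQ
        by_cases hQr : Q.radical = p
        · have : Q ∈ good := by rw [hgood, Finset.mem_filter]; exact ⟨hQ, hQr⟩
          exact Ideal.mul_mem_right _ _ (h Q this)
        · have : Q ∈ bad := by rw [hbad, Finset.mem_filter]; exact ⟨hQ, hQr⟩
          exact Ideal.mul_mem_left _ _ (hsbad Q this)
    refine ⟨⟨s, hsScp⟩, ?_, ?_⟩
    · intro h0
      exact hs0 (congrArg Subtype.val h0)
    · show s • m ∈ NN
      rcases Finset.eq_empty_or_nonempty good with hge | ⟨Q₀, hQ₀⟩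
      · have : (1 : S) ∈ J := by rw [hJeq, hge]; simp
        have : s • m = 0 := by
          have h1 := (hJ 1).1 this
          rwa [one_smul] at h1
        rw [this]; exact zero_mem _
      · apply Submodule.subset_span
        refine ⟨J, hJ, ?_⟩
        rw [hJeq]
        have hall : ∀ ⦃Q⦄, Q ∈ good → (id Q : Ideal S).radical = (id Q₀ : Ideal S).radical := by
          intro Q hQ
          simp only [id_eq]
          rw [(hgoodmem Q hQ).2, (hgoodmem Q₀ hQ₀).2]
        rw [Ideal.radical_finset_inf hQ₀ hall]
        exact (hgoodmem Q₀ hQ₀).2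
  -- rank argument
  exact statement13.rk_eq_of_le_of_torsion hNle
    (fun m hm => (hkey m hm).imp (fun s hs => ⟨hs.1, hs.2⟩))
end

section
/- Let M be a finitely generated ℕ^r-graded module over S = K[x_1,…,x_r]. Then there exists u_0 ∈ ℕ^r such that for all u, v ∈ ℕ^r with u_0 ≼ u ≼ v, the rank invariant ρ_M(u,v) — the rank of the K-linear map M_u → M_v given by multiplication by x^{v−u} — equals rk_S(M). -/
open Module MvPolynomial


/-!
STATEMENT 14: Let `M` be a finitely generated ℕ^r-graded module over `S = K[x_1,…,x_r]`.
Then there exists `u₀ ∈ ℕ^r` such that for all `u₀ ≼ u ≼ v`, the rank invariant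
`ρ_M(u,v)` — the rank of the `K`-linear map `M_u → M_v` given by multiplication by the
monomial `x^{v−u}` — equals `rk_S(M)`.  (The map is quantified by its defining
property.)
-/

set_option maxHeartbeats 1600000 in
set_option synthInstance.maxHeartbeats 400000 in
theorem statement14 (K : Type) [Field K] (r : ℕ)
    (M : Type) [AddCommGroup M] [Module (MvPolynomial (Fin r) K) M]
    [Module K M] [IsScalarTower K (MvPolynomial (Fin r) K) M]
    [Module.Finite (MvPolynomial (Fin r) K) M]
    (ℳ : (Fin r →₀ ℕ) → Submodule K M)
    (hM : DirectSum.IsInternal ℳ)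
    (hMgr : ∀ (u v : Fin r →₀ ℕ) (c : K) (m : M), m ∈ ℳ v →
      (MvPolynomial.monomial u c) • m ∈ ℳ (u + v)) :
    ∃ u₀ : Fin r →₀ ℕ, ∀ u v : Fin r →₀ ℕ, u₀ ≤ u → u ≤ v →
      ∀ f : ↥(ℳ u) →ₗ[K] ↥(ℳ v),
        (∀ m : ↥(ℳ u), (f m : M) = (MvPolynomial.monomial (v - u) (1 : K)) • (m : M)) →
        Module.finrank K ↥(LinearMap.range f) = rk (MvPolynomial (Fin r) K) M := by
  classical
  set S := MvPolynomial (Fin r) K with hSdef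
  letI : DirectSum.Decomposition ℳ := hM.chooseDecomposition
  -- homogeneous generators
  obtain ⟨s, hs⟩ : ∃ s : Finset M, Submodule.span S (s : Set M) = ⊤ := Module.Finite.fg_top (R := S)
  set G : Finset ((Fin r →₀ ℕ) × M) :=
    s.biUnion (fun m => (DFinsupp.support (DirectSum.decompose ℳ m)).image
      (fun w => (w, ((DirectSum.decompose ℳ m) w : M)))) with hGdef
  set ι := {p // p ∈ G}
  set deg : ι → (Fin r →₀ ℕ) := fun p => p.1.1 with hdeg
  set gen : ι → M := fun p => p.1.2 with hgen
  have hgenmem : ∀ p : ι, gen p ∈ ℳ (deg p) := by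
    rintro ⟨⟨d, g⟩, hp⟩
    simp only [hGdef, Finset.mem_biUnion, Finset.mem_image] at hp
    obtain ⟨m, _, w, _, hw⟩ := hp
    obtain ⟨h1, h2⟩ := Prod.mk.injEq .. ▸ hw
    subst h1
    subst h2
    exact ((DirectSum.decompose ℳ m) w).2
  have hGspan : Submodule.span S (Set.range gen) = ⊤ := by
    rw [eq_top_iff, ← hs, Submodule.span_le]
    intro m hm
    have : m = ∑ w ∈ DFinsupp.support (DirectSum.decompose ℳ m),
        ((DirectSum.decompose ℳ m) w : M) := (DirectSum.sum_support_decompose ℳ m).symm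
    rw [this]
    refine Submodule.sum_mem _ (fun w hw => Submodule.subset_span ?_)
    refine ⟨⟨(w, ((DirectSum.decompose ℳ m) w : M)), ?_⟩, rfl⟩
    simp only [hGdef, Finset.mem_biUnion, Finset.mem_image]
    exact ⟨m, hm, w, hw, rfl⟩
  -- degree bound and spanning families
  set bigd : Fin r →₀ ℕ := ∑ p ∈ G, p.1 with hbigd
  have hdegle : ∀ (p : ι) (u : Fin r →₀ ℕ), bigd ≤ u → deg p ≤ u := by
    intro p u hu
    refine le_trans ?_ hu
    exact Finset.single_le_sum (f := fun q : (Fin r →₀ ℕ) × M => q.1)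
      (fun _ _ => zero_le) p.2
  set Y : (Fin r →₀ ℕ) → Set M :=
    fun v => Set.range (fun p : ι => (monomial (v - deg p) (1 : K) : S) • gen p) with hY
  have hYfin : ∀ v, (Y v).Finite := fun v => Set.finite_range _
  have hYmem : ∀ v, bigd ≤ v → Y v ⊆ (ℳ v : Set M) := by
    intro v hv x hx
    obtain ⟨p, rfl⟩ : ∃ p : ι, (monomial (v - deg p) (1 : K) : S) • gen p = x := hx
    have := hMgr (v - deg p) (deg p) 1 (gen p) (hgenmem p)
    rwa [tsub_add_cancel_of_le (hdegle p v hv)] at this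
  -- multiplication operators
  set μ : (Fin r →₀ ℕ) → M →ₗ[K] M :=
    fun w => ((LinearMap.lsmul S M ((monomial w (1 : K)) : S)).restrictScalars K) with hμdef
  have hμ : ∀ w m, μ w m = ((monomial w (1 : K) : S)) • m := fun w m => rfl
  have hμmul : ∀ (w a : Fin r →₀ ℕ) (m : M),
      μ w ((monomial a (1 : K) : S) • m) = (monomial (w + a) (1 : K) : S) • m := by
    intro w a m
    rw [hμ, smul_smul, monomial_mul, one_mul]
  -- image of spanning family
  have hYimage : ∀ v v' : Fin r →₀ ℕ, v ≤ v' → bigd ≤ v →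
      (μ (v' - v)) '' (Y v) = Y v' := by
    intro v v' hvv' hv
    have key : ∀ p : ι, μ (v' - v) ((monomial (v - deg p) (1:K) : S) • gen p)
        = (monomial (v' - deg p) (1:K) : S) • gen p := by
      intro p
      rw [hμmul, tsub_add_tsub_cancel hvv' (hdegle p v hv)]
    ext x
    simp only [hY, Set.mem_image, Set.mem_range]
    constructor
    · rintro ⟨y, ⟨p, rfl⟩, rfl⟩
      exact ⟨p, (key p).symm⟩
    · rintro ⟨p, rfl⟩
      exact ⟨_, ⟨p, rfl⟩, key p⟩
  have hspanmap : ∀ v v' : Fin r →₀ ℕ, v ≤ v' → bigd ≤ v →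
      Submodule.map (μ (v' - v)) (Submodule.span K (Y v)) = Submodule.span K (Y v') := by
    intro v v' hvv' hv
    rw [Submodule.map_span, hYimage v v' hvv' hv]
  -- projection onto graded pieces
  set πL : (Fin r →₀ ℕ) → M →ₗ[K] M := fun u =>
    ((ℳ u).subtype) ∘ₗ (DFinsupp.lapply u) ∘ₗ (DirectSum.decomposeLinearEquiv ℳ).toLinearMap
    with hπL
  have hπ_apply : ∀ u m, πL u m = ((DirectSum.decompose ℳ m) u : M) := fun u m => rfl
  have hπ_same : ∀ u m, m ∈ ℳ u → πL u m = m := by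
    intro u m hm
    rw [hπ_apply, DirectSum.decompose_of_mem_same ℳ hm]
  have hπ_ne : ∀ u w m, m ∈ ℳ w → w ≠ u → πL u m = 0 := by
    intro u w m hm hne
    rw [hπ_apply, DirectSum.decompose_of_mem_ne ℳ hm hne]
  -- the graded pieces are spanned by the shifted generators
  have hMeq : ∀ u : Fin r →₀ ℕ, bigd ≤ u →
      (ℳ u : Submodule K M) = Submodule.span K (Y u) := by
    intro u hu
    refine le_antisymm ?_ ?_
    · intro m hm
      have hmtop : m ∈ Submodule.span S (Set.range gen) := by rw [hGspan]; trivial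
      obtain ⟨cf, hcf⟩ := Submodule.mem_span_range_iff_exists_fun S |>.mp hmtop
      have hm2 : m = ∑ p : ι, πL u (cf p • gen p) := by
        conv_lhs => rw [← hπ_same u m hm, ← hcf]
        rw [map_sum]
      rw [hm2]
      refine Submodule.sum_mem _ (fun p _ => ?_)
      have hexp : cf p • gen p
          = ∑ w ∈ (cf p).support, (monomial w (coeff w (cf p)) : S) • gen p := by
        conv_lhs => rw [(cf p).as_sum]
        rw [Finset.sum_smul]
      rw [hexp, map_sum]
      refine Submodule.sum_mem _ (fun w hw => ?_)
      have hterm : (monomial w (coeff w (cf p)) : S) • gen p ∈ ℳ (w + deg p) :=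
        hMgr w (deg p) _ (gen p) (hgenmem p)
      by_cases hwu : w + deg p = u
      · rw [hπ_same u _ (hwu ▸ hterm)]
        have hw' : w = u - deg p := eq_tsub_of_add_eq hwu
        subst hw'
        have : (monomial (u - deg p) (coeff (u - deg p) (cf p)) : S) • gen p
            = coeff (u - deg p) (cf p) • ((monomial (u - deg p) (1:K) : S) • gen p) := by
          conv_rhs => rw [← smul_assoc, smul_monomial, smul_eq_mul, mul_one]
        rw [this]
        exact Submodule.smul_mem _ _ (Submodule.subset_span ⟨p, rfl⟩)
      · rw [hπ_ne u _ _ hterm hwu]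
        exact Submodule.zero_mem _
    · rw [Submodule.span_le]
      exact hYmem u hu
  -- the dimension function and its stabilization
  haveI hfd : ∀ v, FiniteDimensional K ↥(Submodule.span K (Y v)) :=
    fun v => FiniteDimensional.span_of_finite K (hYfin v)
  set D : (Fin r →₀ ℕ) → ℕ := fun v => finrank K ↥(Submodule.span K (Y v)) with hD
  have hDanti : ∀ v v' : Fin r →₀ ℕ, v ≤ v' → bigd ≤ v → D v' ≤ D v := by
    intro v v' hvv' hv
    rw [hD]
    simp only
    rw [← hspanmap v v' hvv' hv]
    exact Submodule.finrank_map_le _ _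
  obtain ⟨v₀', hv₀'⟩ : ∃ n, D (bigd + n) = sInf (Set.range fun n => D (bigd + n)) :=
    Nat.sInf_mem (Set.range_nonempty _)
  set v₀ : Fin r →₀ ℕ := bigd + v₀' with hv₀
  have hbigdv₀ : bigd ≤ v₀ := le_add_right le_rfl
  have hstab : ∀ v, v₀ ≤ v → D v = D v₀ := by
    intro v hv
    have h1 : D v ≤ D v₀ := hDanti v₀ v hv hbigdv₀
    have h2 : D v₀ ≤ D v := by
      rw [hv₀, hv₀']
      refine Nat.sInf_le ⟨v - bigd, ?_⟩
      show D (bigd + (v - bigd)) = D v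
      rw [add_tsub_cancel_of_le (le_trans hbigdv₀ hv)]
    omega
  -- the fraction field and base change
  set Q := FractionRing S with hQ
  set ψ : M →ₗ[S] TensorProduct S Q M := TensorProduct.mk S Q M 1 with hψ
  haveI hloc : IsLocalizedModule (nonZeroDivisors S) ψ :=
    (isLocalizedModule_iff_isBaseChange (nonZeroDivisors S) Q ψ).mpr
      (TensorProduct.isBaseChange S M Q)
  haveI : Module.Finite Q (TensorProduct S Q M) := Module.Finite.base_change S Q M
  -- the key claim: the stable dimension equals the rank
  have hDrk : ∀ v, v₀ ≤ v → D v = rk S M := by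
    intro v hv
    have hbv : bigd ≤ v := le_trans hbigdv₀ hv
    obtain ⟨b, hbY, hbspan, hbind⟩ := exists_linearIndependent K (Y v)
    haveI : Fintype ↥b := ((hYfin v).subset hbY).fintype
    have hbcard : D v = b.toFinset.card := by
      rw [hD]
      simp only
      rw [← hbspan]
      exact finrank_span_set_eq_card hbind
    have hbM : ∀ i : ↥b, (i : M) ∈ ℳ v := fun i => hYmem v hbv (hbY i.2)
    -- Q-linear independence of the images of b
    have hQind : LinearIndependent Q (fun i : ↥b => ψ (i : M)) := by
      rw [Fintype.linearIndependent_iff]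
      intro g hg
      by_contra hcon
      push_neg at hcon
      obtain ⟨i₀, hi₀⟩ := hcon
      obtain ⟨t, ht⟩ := IsLocalization.exist_integer_multiples_of_finite (nonZeroDivisors S) g
      choose pp hpp using ht
      have h1 : ψ (∑ i : ↥b, pp i • (i : M)) = 0 := by
        rw [map_sum]
        have key : ∀ i : ↥b, ψ (pp i • (i : M)) = (algebraMap S Q (t : S)) • (g i • ψ (i : M)) := by
          intro i
          rw [map_smul, ← algebraMap_smul Q (pp i) (ψ (i : M)), hpp i, Algebra.smul_def, mul_smul]
        rw [Finset.sum_congr rfl (fun i _ => key i), ← Finset.smul_sum, hg, smul_zero]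
      obtain ⟨s₀, hs₀⟩ := (IsLocalizedModule.eq_zero_iff (nonZeroDivisors S) ψ).mp h1
      set q : ↥b → S := fun i => (s₀ : S) * pp i with hqdef
      have hq0 : ∑ i : ↥b, q i • (i : M) = 0 := by
        have := hs₀
        rw [Submonoid.smul_def, Finset.smul_sum] at this
        simp_rw [smul_smul] at this
        exact this
      have hppne : pp i₀ ≠ 0 := by
        intro h0
        apply hi₀
        have : algebraMap S Q (pp i₀) = (t : S) • g i₀ := hpp i₀
        rw [h0, map_zero] at this
        have ht0 : algebraMap S Q (t : S) ≠ 0 := by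
          rw [hSdef] at *
          exact (map_ne_zero_iff _ (IsFractionRing.injective _ _)).mpr
            (nonZeroDivisors.ne_zero t.2)
        rw [Algebra.smul_def] at this
        rcases mul_eq_zero.mp this.symm with h | h
        · exact absurd h ht0
        · exact h
      have hqne : q i₀ ≠ 0 := mul_ne_zero (nonZeroDivisors.ne_zero s₀.2) hppne
      -- pass to a homogeneous component
      obtain ⟨w₀, hw₀⟩ : ∃ w₀, w₀ ∈ (q i₀).support := by
        rcases Finset.eq_empty_or_nonempty (q i₀).support with h | h
        · exact absurd (MvPolynomial.support_eq_empty.mp h) hqne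
        · exact h
      set A : Finset (Fin r →₀ ℕ) := Finset.univ.biUnion (fun i : ↥b => (q i).support) with hA
      have hw₀A : w₀ ∈ A := Finset.mem_biUnion.mpr ⟨i₀, Finset.mem_univ _, hw₀⟩
      set T : (Fin r →₀ ℕ) → M :=
        fun w => ∑ i : ↥b, (monomial w (coeff w (q i)) : S) • (i : M) with hT
      have hTmem : ∀ w, T w ∈ ℳ (w + v) :=
        fun w => Submodule.sum_mem _ (fun i _ => hMgr w v _ _ (hbM i))
      have hTsum : ∑ w ∈ A, T w = 0 := by
        rw [hT]
        simp only
        rw [Finset.sum_comm]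
        rw [← hq0]
        refine Finset.sum_congr rfl (fun i _ => ?_)
        rw [← Finset.sum_smul]
        congr 1
        conv_rhs => rw [(q i).as_sum]
        refine (Finset.sum_subset (fun w hw => Finset.mem_biUnion.mpr ⟨i, Finset.mem_univ _, hw⟩)
          (fun w _ hw => ?_)).symm
        rw [MvPolynomial.notMem_support_iff.mp hw, map_zero]
      have hTzero : T w₀ = 0 := by
        have hdec : ∑ w ∈ A, (DirectSum.of (fun u => ↥(ℳ u)) (w + v)) ⟨T w, hTmem w⟩ = 0 := by
          have h0 : ∑ w ∈ A, DirectSum.decomposeLinearEquiv ℳ (T w) = 0 := by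
            rw [← map_sum, hTsum, map_zero]
          rw [← h0]
          refine Finset.sum_congr rfl (fun w _ => ?_)
          rw [DirectSum.decomposeLinearEquiv_apply, DirectSum.decompose_of_mem ℳ (hTmem w)]
        have h2 := congrArg (DirectSum.component K (Fin r →₀ ℕ) (fun u => ↥(ℳ u)) (w₀ + v)) hdec
        rw [map_sum, map_zero, Finset.sum_eq_single w₀] at h2
        · rw [← DirectSum.lof_eq_of K, DirectSum.component.of, dif_pos rfl] at h2
          simpa using congrArg Subtype.val h2
        · intro w _ hne
          rw [← DirectSum.lof_eq_of K, DirectSum.component.of,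
            dif_neg (fun h : w + v = w₀ + v => hne (add_right_cancel h))]
        · intro h
          exact absurd hw₀A h
      -- stabilization gives injectivity of multiplication on the span
      have hstabv : D (v + w₀) = D v := by
        rw [hstab v hv, hstab (v + w₀) (le_trans hv (le_add_right le_rfl))]
      have hdisj : Disjoint (Submodule.span K (Set.range (Subtype.val : ↥b → M)))
          (LinearMap.ker (μ w₀)) := by
        rw [Subtype.range_coe, hbspan]
        have hker : LinearMap.ker ((μ w₀).domRestrict (Submodule.span K (Y v))) = ⊥ := by
          have h1 : LinearMap.range ((μ w₀).domRestrict (Submodule.span K (Y v)))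
              = Submodule.map (μ w₀) (Submodule.span K (Y v)) :=
            LinearMap.range_domRestrict _ _
          have h2 : Submodule.map (μ w₀) (Submodule.span K (Y v))
              = Submodule.span K (Y (v + w₀)) := by
            have := hspanmap v (v + w₀) (le_add_right le_rfl) hbv
            rwa [add_tsub_cancel_left] at this
          have h3 := LinearMap.finrank_range_add_finrank_ker
            ((μ w₀).domRestrict (Submodule.span K (Y v)))
          rw [h1, h2] at h3
          have h4 : finrank K ↥(Submodule.span K (Y (v + w₀)))
              = finrank K ↥(Submodule.span K (Y v)) := hstabv
          rw [h4] at h3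
          have h5 : finrank K ↥(LinearMap.ker
              ((μ w₀).domRestrict (Submodule.span K (Y v)))) = 0 := by omega
          exact (Submodule.finrank_eq_zero).mp h5
        rw [Submodule.disjoint_def]
        intro x hxN hxker
        have hx : (⟨x, hxN⟩ : ↥(Submodule.span K (Y v))) ∈
            LinearMap.ker ((μ w₀).domRestrict (Submodule.span K (Y v))) := by
          simpa [LinearMap.mem_ker] using hxker
        rw [hker] at hx
        simpa using congrArg Subtype.val hx
      have hmapind : LinearIndependent K (⇑(μ w₀) ∘ (Subtype.val : ↥b → M)) :=
        hbind.map hdisj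
      have hrel : ∑ i : ↥b, coeff w₀ (q i) • ((μ w₀) (i : M)) = 0 := by
        rw [← hTzero, hT]
        simp only
        refine Finset.sum_congr rfl (fun i _ => ?_)
        rw [hμ]
        conv_lhs => rw [← smul_assoc, smul_monomial, smul_eq_mul, mul_one]
      exact (MvPolynomial.mem_support_iff.mp hw₀)
        ((Fintype.linearIndependent_iff.mp hmapind _ hrel) i₀)
    -- Q-spanning by the images of b
    have h1 : ∀ x ∈ Submodule.span S b, ψ x ∈ Submodule.span Q (⇑ψ '' b) := by
      intro x hx
      have hmap : ψ x ∈ Submodule.map ψ (Submodule.span S b) := ⟨x, hx, rfl⟩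
      rw [Submodule.map_span] at hmap
      have hle : Submodule.span S (⇑ψ '' b)
          ≤ (Submodule.span Q (⇑ψ '' b)).restrictScalars S := by
        rw [Submodule.span_le]
        exact Submodule.subset_span
      exact hle hmap
    have h2 : ∀ p : ι, ψ (gen p) ∈ Submodule.span Q (⇑ψ '' b) := by
      intro p
      set a : Q := algebraMap S Q ((monomial (v - deg p) (1 : K)) : S) with hadef
      have ha : a ≠ 0 := by
        rw [hadef, hSdef] at *
        exact (map_ne_zero_iff _ (IsFractionRing.injective _ _)).mpr
          (fun h => one_ne_zero (MvPolynomial.monomial_eq_zero.mp h))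
      have hmemb : (monomial (v - deg p) (1 : K) : S) • gen p ∈ Submodule.span S b := by
        have hYv : (monomial (v - deg p) (1 : K) : S) • gen p ∈ Y v := ⟨p, rfl⟩
        have : (monomial (v - deg p) (1 : K) : S) • gen p ∈ Submodule.span K b := by
          rw [hbspan]
          exact Submodule.subset_span hYv
        exact Submodule.span_le_restrictScalars K S b this
      have h3 := h1 _ hmemb
      have h4 : ψ ((monomial (v - deg p) (1 : K) : S) • gen p) = a • ψ (gen p) := by
        rw [map_smul, hadef, algebraMap_smul]
      have h5 := Submodule.smul_mem (Submodule.span Q (⇑ψ '' b)) a⁻¹ h3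
      rwa [h4, smul_smul, inv_mul_cancel₀ ha, one_smul] at h5
    have h6 : ∀ m : M, ψ m ∈ Submodule.span Q (⇑ψ '' b) := by
      intro m
      have hm : m ∈ Submodule.span S (Set.range gen) := by rw [hGspan]; trivial
      have hle : Submodule.span S (Set.range gen) ≤
          Submodule.comap ψ ((Submodule.span Q (⇑ψ '' b)).restrictScalars S) := by
        rw [Submodule.span_le]
        rintro x ⟨p, rfl⟩
        exact h2 p
      exact hle hm
    have hspanQ : Submodule.span Q (⇑ψ '' b) = ⊤ := by
      rw [eq_top_iff]
      rintro z -
      induction z using TensorProduct.induction_on with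
      | zero => exact Submodule.zero_mem _
      | tmul qq m =>
        have : qq ⊗ₜ[S] m = qq • ψ m := by
          rw [hψ, TensorProduct.mk_apply, TensorProduct.smul_tmul', smul_eq_mul, mul_one]
        rw [this]
        exact Submodule.smul_mem _ _ (h6 m)
      | add z₁ z₂ hz₁ hz₂ => exact Submodule.add_mem _ hz₁ hz₂
    -- counting dimensions
    haveI : Fintype ↥(⇑ψ '' b) := (((hYfin v).subset hbY).image _).fintype
    have le1 : finrank Q (TensorProduct S Q M) ≤ b.toFinset.card := by
      have e1 : finrank Q (TensorProduct S Q M)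
          = finrank Q ↥(Submodule.span Q (⇑ψ '' b)) := by
        rw [hspanQ, finrank_top]
      rw [e1]
      refine le_trans (finrank_span_le_card _) ?_
      rw [Set.toFinset_image]
      exact Finset.card_image_le
    have le2 : b.toFinset.card ≤ finrank Q (TensorProduct S Q M) := by
      rw [Set.toFinset_card]
      exact hQind.fintype_card_le_finrank
    have hrkeq : rk S M = finrank Q (TensorProduct S Q M) := rfl
    rw [hbcard, hrkeq]
    omega
  -- final assembly
  refine ⟨v₀, fun u v huu huv f hf => ?_⟩
  have hbu : bigd ≤ u := le_trans hbigdv₀ huu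
  have hcomp : (ℳ v).subtype ∘ₗ f = (μ (v - u)) ∘ₗ (ℳ u).subtype := by
    ext m
    simp [hf m, hμ]
  have h1 : Submodule.map (ℳ v).subtype (LinearMap.range f) = Submodule.span K (Y v) := by
    rw [← LinearMap.range_comp, hcomp, LinearMap.range_comp, Submodule.range_subtype,
      hMeq u hbu, hspanmap u v huv hbu]
  rw [← Submodule.finrank_map_subtype_eq (ℳ v) (LinearMap.range f), h1]
  exact hDrk v (le_trans huu huv)
end

section
/- Let M be a finitely generated ℕ^r-graded module over S = K[x_1,…,x_r], let u ∈ ℕ^r have u_i > 0 for all i, and let u_0 ∈ ℕ^r. Then the rank of the restriction of M to the line l(j) = j·u + u_0 equals rk_S(M); concretely, there exists N ∈ ℕ such that for all j ≥ N, dim_K M_{j·u + u_0} = rk_S(M), and hence the ℕ-graded K[x]-module M∘l with (M∘l)_j = M_{j·u+u_0} and x acting by multiplication by x^u satisfies rk_{K[x]}(M∘l) = rk_S(M). -/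
/-!
STATEMENT 17: Let `M` be a finitely generated ℕ^r-graded module over `S = K[x_1,…,x_r]`,
let `u ∈ ℕ^r` with `u_i > 0` for all `i`, and let `u₀ ∈ ℕ^r`.  Then the rank of the
restriction of `M` to the line `l(j) = j·u + u₀` equals `rk_S(M)`: concretely,
(1) there is `N` with `dim_K M_{j·u+u₀} = rk_S(M)` for all `j ≥ N`, and hence
(2) any ℕ-graded `K[x]`-module `M'` whose graded pieces are (isomorphic to) the
`M_{j·u+u₀}` and on which `x` acts as multiplication by the monomial `x^u`
satisfies `rk_{K[x]}(M') = rk_S(M)`.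
-/

open DirectSum
section Proj
variable {R : Type*} [Semiring R] {V : Type*} [AddCommMonoid V] [Module R V]
variable {ι : Type*} [DecidableEq ι] {p : ι → Submodule R V}
noncomputable def projOf (h : DirectSum.IsInternal p) (i : ι) : V →ₗ[R] V :=
  (p i).subtype ∘ₗ
    ((DirectSum.component R ι (fun j => ↥(p j)) i) ∘ₗ
      ((LinearEquiv.ofBijective (DirectSum.coeLinearMap p) h).symm : V →ₗ[R] ⨁ j, ↥(p j)))
lemma projOf_apply (h : DirectSum.IsInternal p) (i : ι) (m : V) :
    projOf h i m = ((LinearEquiv.ofBijective (DirectSum.coeLinearMap p) h).symm m i : V) := rfl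
lemma projOf_mem (h : DirectSum.IsInternal p) (i : ι) (m : V) : projOf h i m ∈ p i := by
  rw [projOf_apply]; exact Subtype.coe_prop _
lemma projOf_mem_same (h : DirectSum.IsInternal p) {i : ι} {m : V} (hm : m ∈ p i) :
    projOf h i m = m := by
  rw [projOf_apply, h.ofBijective_coeLinearMap_of_mem hm]
lemma projOf_mem_ne (h : DirectSum.IsInternal p) {i j : ι} (hij : i ≠ j) {m : V}
    (hm : m ∈ p i) : projOf h j m = 0 := by
  rw [projOf_apply, h.ofBijective_coeLinearMap_of_mem_ne hij hm]; rfl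
open Classical in
lemma exists_finset_sum_projOf (h : DirectSum.IsInternal p) (m : V) :
    ∃ fs : Finset ι, m = ∑ i ∈ fs, projOf h i m := by
  classical
  set x := (LinearEquiv.ofBijective (DirectSum.coeLinearMap p) h).symm m with hx
  refine ⟨DFinsupp.support x, ?_⟩
  have h1 : DirectSum.coeLinearMap p x = m := by
    exact (LinearEquiv.ofBijective (DirectSum.coeLinearMap p) h).apply_symm_apply m
  conv_lhs => rw [← h1]
  rw [DirectSum.coeLinearMap_eq_dfinsuppSum, DFinsupp.sum]
  exact Finset.sum_congr rfl fun i _ => (projOf_apply h i m).symm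
end Proj

section Mv
variable {K : Type} [Field K] {r : ℕ}
variable {M : Type} [AddCommGroup M] [Module (MvPolynomial (Fin r) K) M]
    [Module K M] [IsScalarTower K (MvPolynomial (Fin r) K) M]
variable {ℳ : (Fin r →₀ ℕ) → Submodule K M}
variable (hM : DirectSum.IsInternal ℳ)
variable (hMgr : ∀ (u v : Fin r →₀ ℕ) (c : K) (m : M), m ∈ ℳ v →
      (MvPolynomial.monomial u c) • m ∈ ℳ (u + v))

local notation "S" => MvPolynomial (Fin r) K

lemma smul_eq_sum_monomial (q : S) (m : M) :
    q • m = ∑ w ∈ q.support, (MvPolynomial.monomial w (MvPolynomial.coeff w q)) • m := by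
  rw [← Finset.sum_smul, MvPolynomial.support_sum_monomial_coeff]

include hM hMgr in
lemma projOf_poly_smul_of_le {v d : Fin r →₀ ℕ} (hvd : v ≤ d) (q : S) {m : M} (hm : m ∈ ℳ v) :
    projOf hM d (q • m)
      = (MvPolynomial.monomial (d - v) (MvPolynomial.coeff (d - v) q)) • m := by
  classical
  rw [smul_eq_sum_monomial, map_sum]
  have hterm : ∀ w ∈ q.support,
      projOf hM d ((MvPolynomial.monomial w (MvPolynomial.coeff w q)) • m)
        = if w = d - v then (MvPolynomial.monomial w (MvPolynomial.coeff w q)) • m else 0 := by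
    intro w _
    by_cases hw : w + v = d
    · have hw' : w = d - v := by
        rw [← hw]; exact (add_tsub_cancel_right w v).symm
      rw [if_pos hw', projOf_mem_same hM (hw ▸ hMgr w v _ m hm)]
    · have hw' : w ≠ d - v := by
        intro hc; apply hw; rw [hc]; exact tsub_add_cancel_of_le hvd
      rw [if_neg hw', projOf_mem_ne hM hw (hMgr w v _ m hm)]
  rw [Finset.sum_congr rfl hterm, Finset.sum_ite_eq' q.support (d - v)
    (fun w => (MvPolynomial.monomial w (MvPolynomial.coeff w q)) • m)]
  by_cases hmem : d - v ∈ q.support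
  · rw [if_pos hmem]
  · rw [if_neg hmem]
    have : MvPolynomial.coeff (d - v) q = 0 := by
      simpa using MvPolynomial.notMem_support_iff.mp hmem
    rw [this]
    simp

include hM hMgr in
lemma projOf_poly_smul_of_not_le {v d : Fin r →₀ ℕ} (hvd : ¬ v ≤ d) (q : S) {m : M}
    (hm : m ∈ ℳ v) : projOf hM d (q • m) = 0 := by
  classical
  rw [smul_eq_sum_monomial, map_sum]
  apply Finset.sum_eq_zero
  intro w _
  have hw : w + v ≠ d := by
    intro hc; exact hvd (hc ▸ le_add_self)
  exact projOf_mem_ne hM hw (hMgr w v _ m hm)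

end Mv

section Mv2
set_option linter.unusedSectionVars false
variable {K : Type} [Field K] {r : ℕ}
variable {M : Type} [AddCommGroup M] [Module (MvPolynomial (Fin r) K) M]
    [Module K M] [IsScalarTower K (MvPolynomial (Fin r) K) M]
variable {ℳ : (Fin r →₀ ℕ) → Submodule K M}
variable (hM : DirectSum.IsInternal ℳ)
variable (hMgr : ∀ (u v : Fin r →₀ ℕ) (c : K) (m : M), m ∈ ℳ v →
      (MvPolynomial.monomial u c) • m ∈ ℳ (u + v))

local notation "S" => MvPolynomial (Fin r) K

include hM in
lemma exists_homogeneous_generators [Module.Finite S M] :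
    ∃ (σ : Type) (_ : Fintype σ) (g : σ → M) (a : σ → (Fin r →₀ ℕ)),
      (∀ s, g s ∈ ℳ (a s)) ∧ ∀ m : M, m ∈ Submodule.span S (Set.range g) := by
  classical
  obtain ⟨n₀, g₀, hg₀⟩ := Module.Finite.exists_fin (R := S) (M := M)
  choose fs hfs using fun i => exists_finset_sum_projOf hM (g₀ i)
  refine ⟨(i : Fin n₀) × {w : Fin r →₀ ℕ // w ∈ fs i}, inferInstance,
    fun s => projOf hM s.2.1 (g₀ s.1), fun s => s.2.1, fun s => projOf_mem hM _ _, ?_⟩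
  intro m
  have hsub : Set.range g₀ ⊆
      (Submodule.span S (Set.range fun s : (i : Fin n₀) × {w // w ∈ fs i} =>
        projOf hM s.2.1 (g₀ s.1)) : Set M) := by
    rintro _ ⟨i, rfl⟩
    rw [hfs i]
    refine Submodule.sum_mem _ ?_
    intro w hw
    exact Submodule.subset_span ⟨⟨i, ⟨w, hw⟩⟩, rfl⟩
  have := Submodule.span_le.mpr hsub
  rw [hg₀] at this
  exact this (Submodule.mem_top)

include hM hMgr in
lemma piece_mem_span {σ : Type} [Fintype σ] {g : σ → M} {a : σ → (Fin r →₀ ℕ)}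
    (hg : ∀ s, g s ∈ ℳ (a s)) (hgen : ∀ m : M, m ∈ Submodule.span S (Set.range g))
    (d : Fin r →₀ ℕ) {m : M} (hm : m ∈ ℳ d) :
    ∃ κ : σ → K, m = ∑ s, κ s •
      (if a s ≤ d then (MvPolynomial.monomial (d - a s) (1 : K)) • g s else 0) := by
  classical
  obtain ⟨c, hc⟩ := (Submodule.mem_span_range_iff_exists_fun _).mp (hgen m)
  refine ⟨fun s => MvPolynomial.coeff (d - a s) (c s), ?_⟩
  have h1 : m = projOf hM d m := (projOf_mem_same hM hm).symm
  conv_lhs => rw [h1, ← hc]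
  rw [map_sum]
  apply Finset.sum_congr rfl
  intro s _
  by_cases hle : a s ≤ d
  · rw [projOf_poly_smul_of_le hM hMgr hle (c s) (hg s), if_pos hle]
    rw [← smul_assoc]
    congr 1
    rw [MvPolynomial.smul_monomial]
    simp
  · rw [projOf_poly_smul_of_not_le hM hMgr hle (c s) (hg s), if_neg hle, smul_zero]

include hM hMgr in
lemma piece_fd {σ : Type} [Fintype σ] {g : σ → M} {a : σ → (Fin r →₀ ℕ)}
    (hg : ∀ s, g s ∈ ℳ (a s)) (hgen : ∀ m : M, m ∈ Submodule.span S (Set.range g))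
    (d : Fin r →₀ ℕ) : FiniteDimensional K ↥(ℳ d) := by
  classical
  have hle : ℳ d ≤ Submodule.span K (Set.range fun s =>
      (if a s ≤ d then (MvPolynomial.monomial (d - a s) (1 : K)) • g s else 0)) := by
    intro m hm
    obtain ⟨κ, hκ⟩ := piece_mem_span hM hMgr hg hgen d hm
    rw [hκ]
    exact Submodule.sum_mem _ fun s _ => Submodule.smul_mem _ _ (Submodule.subset_span ⟨s, rfl⟩)
  have : FiniteDimensional K (Submodule.span K (Set.range fun s =>
      (if a s ≤ d then (MvPolynomial.monomial (d - a s) (1 : K)) • g s else 0))) :=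
    FiniteDimensional.span_of_finite K (Set.finite_range _)
  exact Submodule.finiteDimensional_of_le hle

end Mv2

section Mv3
set_option linter.unusedSectionVars false
set_option maxHeartbeats 1000000
variable {K : Type} [Field K] {r : ℕ}
variable {M : Type} [AddCommGroup M] [Module (MvPolynomial (Fin r) K) M]
    [Module K M] [IsScalarTower K (MvPolynomial (Fin r) K) M]
variable {ℳ : (Fin r →₀ ℕ) → Submodule K M}
variable (hM : DirectSum.IsInternal ℳ)
variable (hMgr : ∀ (u v : Fin r →₀ ℕ) (c : K) (m : M), m ∈ ℳ v →
      (MvPolynomial.monomial u c) • m ∈ ℳ (u + v))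

local notation "S" => MvPolynomial (Fin r) K

lemma exists_uniform_annihilator [Module.Finite S M] :
    ∃ c : S, c ≠ 0 ∧ ∀ m ∈ Submodule.torsion S M, c • m = 0 := by
  classical
  have hfg : (Submodule.torsion S M).FG := IsNoetherian.noetherian _
  obtain ⟨T, hT⟩ := hfg
  choose ann hann using fun t : {x // x ∈ T} =>
    (Submodule.mem_torsion_iff _).mp (hT ▸ Submodule.subset_span t.2 :
      (t : M) ∈ Submodule.torsion S M)
  refine ⟨∏ t ∈ T.attach, ((ann t : S)), ?_, ?_⟩
  · apply Finset.prod_ne_zero_iff.mpr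
    intro t _
    exact nonZeroDivisors.ne_zero (ann t).2
  · suffices h : ∀ m ∈ Submodule.span S (T : Set M), (∏ t ∈ T.attach, ((ann t : S))) • m = 0 by
      intro m hm
      exact h m (hT ▸ hm)
    intro m hm'
    induction hm' using Submodule.span_induction with
    | mem x hx =>
      rcases Finset.mem_coe.mp hx with hxT
      have : x = ((⟨x, hxT⟩ : {y // y ∈ T}) : M) := rfl
      rw [this]
      rw [← Finset.mul_prod_erase T.attach _ (Finset.mem_attach T ⟨x, hxT⟩), mul_comm, mul_smul]
      have := hann ⟨x, hxT⟩
      rw [Submonoid.smul_def] at this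
      rw [this, smul_zero]
    | zero => rw [smul_zero]
    | add x y hx' hy' hx hy => rw [smul_add, hx, hy, add_zero]
    | smul a x hx' hx => rw [smul_comm, hx, smul_zero]

end Mv3

section Mv4
set_option linter.unusedSectionVars false
set_option maxHeartbeats 1000000
variable {K : Type} [Field K] {r : ℕ}
variable {M : Type} [AddCommGroup M] [Module (MvPolynomial (Fin r) K) M]
    [Module K M] [IsScalarTower K (MvPolynomial (Fin r) K) M]
variable {ℳ : (Fin r →₀ ℕ) → Submodule K M}

local notation "S" => MvPolynomial (Fin r) K

lemma key [Module.Finite S M]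
    (hM : DirectSum.IsInternal ℳ)
    (hMgr : ∀ (u v : Fin r →₀ ℕ) (c : K) (m : M), m ∈ ℳ v →
      (MvPolynomial.monomial u c) • m ∈ ℳ (u + v))
    (u u₀ : Fin r →₀ ℕ) (hu : ∀ i : Fin r, 0 < u i) :
    (∀ d, FiniteDimensional K ↥(ℳ d)) ∧
    ∃ N : ℕ, ∀ j : ℕ, N ≤ j →
      (∀ m ∈ ℳ (j • u + u₀), (∃ s : S, s ≠ 0 ∧ s • m = 0) → m = 0) ∧
      Module.finrank K ↥(ℳ (j • u + u₀))
        = Module.finrank (FractionRing S) (TensorProduct S (FractionRing S) M) := by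
  classical
  obtain ⟨σ, _, g, a, hg, hgen⟩ := exists_homogeneous_generators hM
  have hFD : ∀ d, FiniteDimensional K ↥(ℳ d) := piece_fd hM hMgr hg hgen
  refine ⟨hFD, ?_⟩
  obtain ⟨c, hc0, hc⟩ := exists_uniform_annihilator (K := K) (r := r) (M := M)
  obtain ⟨w₀, hw₀⟩ := MvPolynomial.ne_zero_iff.mp hc0
  have hmon0 : (MvPolynomial.monomial w₀ (1 : K)) ≠ 0 := by
    simp [MvPolynomial.monomial_eq_zero]
  -- D1 : homogeneous torsion elements are killed by x^{w₀}
  have hD1 : ∀ (d : Fin r →₀ ℕ) (m : M), m ∈ ℳ d → (∃ s : S, s ≠ 0 ∧ s • m = 0) →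
      (MvPolynomial.monomial w₀ (1 : K)) • m = 0 := by
    rintro d m hm ⟨s, hs0, hsm⟩
    have hmt : m ∈ Submodule.torsion S M :=
      ⟨⟨s, mem_nonZeroDivisors_of_ne_zero hs0⟩, hsm⟩
    have h2 : c • m = 0 := hc m hmt
    have h3 := projOf_poly_smul_of_le hM hMgr (le_add_self : d ≤ w₀ + d) c hm
    rw [h2, map_zero, add_tsub_cancel_right] at h3
    have h4 : (MvPolynomial.coeff w₀ c) • ((MvPolynomial.monomial w₀ (1 : K)) • m) = 0 := by
      rw [← smul_assoc]
      have : (MvPolynomial.coeff w₀ c) • (MvPolynomial.monomial w₀ (1 : K))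
          = MvPolynomial.monomial w₀ (MvPolynomial.coeff w₀ c) := by
        rw [MvPolynomial.smul_monomial, smul_eq_mul, mul_one]
      rw [this, ← h3]
    rcases smul_eq_zero.mp h4 with h | h
    · exact absurd h hw₀
    · exact h
  -- the bound
  set N : ℕ := Finset.univ.sup fun s : σ => Finset.univ.sup fun i : Fin r => (a s + w₀ + w₀) i
    with hN
  have hline : ∀ j : ℕ, N ≤ j → ∀ s : σ, a s + w₀ + w₀ ≤ j • u + u₀ := by
    intro j hj s
    rw [Finsupp.le_def]
    intro i
    have h1 : (a s + w₀ + w₀) i ≤ N := by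
      refine le_trans ?_ (Finset.le_sup (Finset.mem_univ s))
      exact Finset.le_sup (f := fun i : Fin r => (a s + w₀ + w₀) i) (Finset.mem_univ i)
    have h2 : j ≤ j * u i := Nat.le_mul_of_pos_right j (hu i)
    have h3 : ((j • u + u₀) : Fin r →₀ ℕ) i = j * u i + u₀ i := by
      simp [Finsupp.add_apply, Finsupp.smul_apply]
    rw [h3]
    exact le_trans h1 (le_trans hj (le_trans h2 (Nat.le_add_right _ _)))
  -- torsion triviality along the line
  have hTor : ∀ j : ℕ, N ≤ j → ∀ m ∈ ℳ (j • u + u₀), (∃ s : S, s ≠ 0 ∧ s • m = 0) → m = 0 := by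
    intro j hj m hm hmt
    set d : Fin r →₀ ℕ := j • u + u₀ with hd
    obtain ⟨κ, hκ⟩ := piece_mem_span hM hMgr hg hgen d hm
    have hsle : ∀ s : σ, a s + w₀ ≤ d := fun s =>
      le_trans le_self_add (hline j hj s)
    have hale : ∀ s : σ, a s ≤ d := fun s => le_trans le_self_add (hsle s)
    have hwle : ∀ s : σ, w₀ ≤ d - a s := fun s => le_tsub_of_add_le_left (hsle s)
    set m' : M := ∑ s, κ s • ((MvPolynomial.monomial (d - a s - w₀) (1 : K)) • g s) with hm'
    have hm'mem : m' ∈ ℳ (d - w₀) := by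
      apply Submodule.sum_mem
      intro s _
      apply Submodule.smul_mem
      have h5 := hMgr (d - a s - w₀) (a s) 1 (g s) (hg s)
      have harith : (d - a s - w₀) + a s = d - w₀ := by
        rw [tsub_tsub, add_comm (a s) w₀, ← tsub_tsub]
        exact tsub_add_cancel_of_le (le_tsub_of_add_le_right (hsle s))
      rwa [harith] at h5
    have hmm' : m = (MvPolynomial.monomial w₀ (1 : K)) • m' := by
      rw [hκ, hm', Finset.smul_sum]
      apply Finset.sum_congr rfl
      intro s _
      rw [if_pos (hale s), smul_comm ((MvPolynomial.monomial w₀) (1 : K)) (κ s)]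
      congr 1
      rw [← mul_smul, MvPolynomial.monomial_mul, one_mul]
      have harith2 : w₀ + (d - a s - w₀) = d - a s := by
        rw [add_comm]; exact tsub_add_cancel_of_le (hwle s)
      rw [harith2]
    have h5 : (MvPolynomial.monomial w₀ (1 : K)) • m = 0 := hD1 d m hm hmt
    have h6 : ((MvPolynomial.monomial w₀ (1 : K)) * (MvPolynomial.monomial w₀ (1 : K))) • m'
        = 0 := by
      rw [mul_smul, ← hmm', h5]
    have h7 : (MvPolynomial.monomial w₀ (1 : K)) • m' = 0 :=
      hD1 (d - w₀) m' hm'mem ⟨_, mul_ne_zero hmon0 hmon0, h6⟩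
    rw [hmm', h7]
  -- a small helper
  have monK : ∀ (w : Fin r →₀ ℕ) (κ : K) (m : M),
      (MvPolynomial.monomial w κ) • m = κ • ((MvPolynomial.monomial w (1 : K)) • m) := by
    intro w κ m
    have h1 : κ • ((MvPolynomial.monomial w (1 : K)) • m)
        = (κ • (MvPolynomial.monomial w (1 : K))) • m := (smul_assoc κ _ m).symm
    rw [h1, MvPolynomial.smul_monomial, smul_eq_mul, mul_one]
  have monne : ∀ w : Fin r →₀ ℕ, (MvPolynomial.monomial w (1 : K)) ≠ 0 := by
    intro w
    simp [MvPolynomial.monomial_eq_zero]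
  refine ⟨N, fun j hj => ⟨hTor j hj, ?_⟩⟩
  set d : Fin r →₀ ℕ := j • u + u₀ with hd
  set Q : Type := FractionRing S with hQ
  set θ : M →ₗ[S] TensorProduct S Q M := TensorProduct.mk S Q M 1 with hθ
  haveI hloc : IsLocalizedModule (nonZeroDivisors S) θ :=
    (isLocalizedModule_iff_isBaseChange (nonZeroDivisors S) Q θ).mpr
      (TensorProduct.isBaseChange S M Q)
  have hker : ∀ m : M, θ m = 0 → ∃ s : S, s ≠ 0 ∧ s • m = 0 := by
    intro m h
    obtain ⟨s', hs'⟩ := (IsLocalizedModule.eq_zero_iff (nonZeroDivisors S) θ).mp h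
    rw [Submonoid.smul_def] at hs'
    exact ⟨s', nonZeroDivisors.ne_zero s'.2, hs'⟩
  have hsm : ∀ (p : S) (m : M), θ (p • m) = (algebraMap S Q p) • θ m := by
    intro p m
    rw [map_smul, algebraMap_smul]
  haveI := hFD d
  set n : ℕ := Module.finrank K ↥(ℳ d) with hn
  set bb : Module.Basis (Fin n) K ↥(ℳ d) := Module.finBasis K ↥(ℳ d) with hbb
  -- upper bound : n ≤ rk
  have hindep : LinearIndependent Q (fun i : Fin n => θ ((bb i : M))) := by
    rw [Fintype.linearIndependent_iff]
    intro q hq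
    obtain ⟨bden, hbden⟩ := IsLocalization.exist_integer_multiples_of_finite
      (nonZeroDivisors S) q
    choose p hp using hbden
    have h1 : θ (∑ i, p i • (bb i : M)) = 0 := by
      rw [map_sum]
      have h2 : ∀ i : Fin n, θ (p i • (bb i : M)) = (bden : S) • (q i • θ (bb i : M)) := by
        intro i
        rw [hsm, hp i, smul_assoc]
      rw [Finset.sum_congr rfl fun i _ => h2 i, ← Finset.smul_sum, hq, smul_zero]
    obtain ⟨cc, hcc0, hcc⟩ := hker _ h1
    have hcc' : ∑ i, ((cc * p i) • (bb i : M)) = 0 := by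
      rw [← hcc, Finset.smul_sum]
      exact Finset.sum_congr rfl fun i _ => (mul_smul cc (p i) _)
    have hcoeff : ∀ (w : Fin r →₀ ℕ) (i : Fin n), MvPolynomial.coeff w (cc * p i) = 0 := by
      intro w
      have h3 := congrArg (projOf hM (w + d)) hcc'
      rw [map_sum, map_zero] at h3
      have h4 : ∀ i : Fin n, projOf hM (w + d) ((cc * p i) • (bb i : M))
          = MvPolynomial.coeff w (cc * p i) • ((MvPolynomial.monomial w (1 : K)) • (bb i : M)) := by
        intro i
        rw [projOf_poly_smul_of_le hM hMgr (le_add_self : d ≤ w + d) _ (bb i).2,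
          add_tsub_cancel_right, monK]
      rw [Finset.sum_congr rfl fun i _ => h4 i] at h3
      set z : M := ∑ i, MvPolynomial.coeff w (cc * p i) • ((bb i : M)) with hz
      have hz1 : (MvPolynomial.monomial w (1 : K)) • z = 0 := by
        rw [hz, Finset.smul_sum, ← h3]
        exact Finset.sum_congr rfl fun i _ =>
          (smul_comm ((MvPolynomial.monomial w (1 : K))) (MvPolynomial.coeff w (cc * p i)) _)
      have hzmem : z ∈ ℳ d :=
        Submodule.sum_mem _ fun i _ => Submodule.smul_mem _ _ (bb i).2
      have hz0 : z = 0 := hTor j hj z hzmem ⟨_, monne w, hz1⟩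
      have hz2 : (∑ i, MvPolynomial.coeff w (cc * p i) • bb i) = (0 : ↥(ℳ d)) := by
        apply Subtype.coe_injective
        push_cast
        rw [← hz0, hz]
      intro i
      exact (Fintype.linearIndependent_iff.mp bb.linearIndependent) _ hz2 i
    have hgz : ∀ i : Fin n, p i = 0 := by
      intro i
      have : cc * p i = 0 := MvPolynomial.eq_zero_iff.mpr fun w => hcoeff w i
      rcases mul_eq_zero.mp this with h | h
      · exact absurd h hcc0
      · exact h
    intro i
    have h5 := hp i
    rw [hgz i, map_zero] at h5
    have hb0 : algebraMap S Q (bden : S) ≠ 0 :=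
      IsFractionRing.to_map_ne_zero_of_mem_nonZeroDivisors bden.2
    have h6 : algebraMap S Q (bden : S) * q i = 0 := by
      rw [← Algebra.smul_def, ← h5]
    rcases mul_eq_zero.mp h6 with h | h
    · exact absurd h hb0
    · exact h
  haveI : Module.Finite Q (TensorProduct S Q M) := Module.Finite.base_change S Q M
  have hub : n ≤ Module.finrank Q (TensorProduct S Q M) := by
    simpa using hindep.fintype_card_le_finrank
  -- lower bound
  have hspan : Submodule.span Q (Set.range fun i : Fin n => θ (bb i : M)) = ⊤ := by
    set P : Submodule Q (TensorProduct S Q M) :=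
      Submodule.span Q (Set.range fun i : Fin n => θ (bb i : M)) with hP
    have hP1 : ∀ m : M, m ∈ ℳ d → θ m ∈ P := by
      intro m hm
      have hrepr := bb.sum_repr ⟨m, hm⟩
      have hm' : m = ∑ i, (bb.repr ⟨m, hm⟩) i • (bb i : M) := by
        conv_lhs => rw [show m = ((⟨m, hm⟩ : ↥(ℳ d)) : M) from rfl, ← hrepr]
        push_cast
        rfl
      rw [hm', map_sum]
      apply Submodule.sum_mem
      intro i _
      have h7 : ((bb.repr ⟨m, hm⟩) i : K) • (bb i : M)
          = (algebraMap K S ((bb.repr ⟨m, hm⟩) i)) • (bb i : M) :=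
        (algebraMap_smul S _ _).symm
      rw [h7, hsm]
      exact Submodule.smul_mem _ _ (Submodule.subset_span ⟨i, rfl⟩)
    have hP2 : ∀ s : σ, θ (g s) ∈ P := by
      intro s
      have hle : a s ≤ d := le_trans (le_trans le_self_add le_self_add) (hline j hj s)
      have h1 : (MvPolynomial.monomial (d - a s) (1 : K)) • g s ∈ ℳ d := by
        have h8 := hMgr (d - a s) (a s) 1 (g s) (hg s)
        rwa [tsub_add_cancel_of_le hle] at h8
      have h2 := hP1 _ h1
      rw [hsm] at h2
      have hmne : algebraMap S Q (MvPolynomial.monomial (d - a s) (1 : K)) ≠ 0 :=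
        IsFractionRing.to_map_ne_zero_of_mem_nonZeroDivisors
          (mem_nonZeroDivisors_of_ne_zero (monne _))
      have h9 := P.smul_mem (algebraMap S Q (MvPolynomial.monomial (d - a s) (1 : K)))⁻¹ h2
      rwa [smul_smul, inv_mul_cancel₀ hmne, one_smul] at h9
    have hP3 : ∀ m : M, θ m ∈ P := by
      intro m
      have hmem := hgen m
      induction hmem using Submodule.span_induction with
      | mem x hx => obtain ⟨s, rfl⟩ := hx; exact hP2 s
      | zero => rw [map_zero]; exact P.zero_mem
      | add x y hx' hy' hx hy => rw [map_add]; exact P.add_mem hx hy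
      | smul p x hx' hx => rw [hsm]; exact P.smul_mem _ hx
    rw [eq_top_iff]
    rintro z -
    induction z using TensorProduct.induction_on with
    | zero => exact P.zero_mem
    | tmul q m =>
        have h10 : q ⊗ₜ[S] m = q • θ m := by
          have : θ m = (1 : Q) ⊗ₜ[S] m := rfl
          rw [this, TensorProduct.smul_tmul', smul_eq_mul, mul_one]
        rw [h10]
        exact P.smul_mem q (hP3 m)
    | add x y hx hy => exact P.add_mem hx hy
  have hlb : Module.finrank Q (TensorProduct S Q M) ≤ n := by
    simpa using finrank_le_of_span_eq_top hspan
  exact le_antisymm hub hlb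

end Mv4

section Poly
set_option linter.unusedSectionVars false
variable {K : Type} [Field K]
variable {M' : Type} [AddCommGroup M'] [Module (Polynomial K) M']
    [Module K M'] [IsScalarTower K (Polynomial K) M']
variable {𝒩 : ℕ → Submodule K M'}
variable (h𝒩 : DirectSum.IsInternal 𝒩)
variable (h𝒩gr : ∀ (w v : ℕ) (c : K) (m : M'), m ∈ 𝒩 v →
      (Polynomial.monomial w c) • m ∈ 𝒩 (w + v))

lemma smul_eq_sum_monomial_poly (q : Polynomial K) (m : M') :
    q • m = ∑ w ∈ q.support, (Polynomial.monomial w (q.coeff w)) • m := by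
  rw [← Finset.sum_smul, ← Polynomial.as_sum_support q]

include h𝒩 h𝒩gr in
lemma projOf_poly_smul_of_le' {v d : ℕ} (hvd : v ≤ d) (q : Polynomial K) {m : M'}
    (hm : m ∈ 𝒩 v) :
    projOf h𝒩 d (q • m) = (Polynomial.monomial (d - v) (q.coeff (d - v))) • m := by
  classical
  rw [smul_eq_sum_monomial_poly, map_sum]
  have hterm : ∀ w ∈ q.support,
      projOf h𝒩 d ((Polynomial.monomial w (q.coeff w)) • m)
        = if w = d - v then (Polynomial.monomial w (q.coeff w)) • m else 0 := by
    intro w _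
    by_cases hw : w + v = d
    · have hw' : w = d - v := by omega
      rw [if_pos hw', projOf_mem_same h𝒩 (hw ▸ h𝒩gr w v _ m hm)]
    · have hw' : w ≠ d - v := by omega
      rw [if_neg hw', projOf_mem_ne h𝒩 hw (h𝒩gr w v _ m hm)]
  rw [Finset.sum_congr rfl hterm, Finset.sum_ite_eq' q.support (d - v)
    (fun w => (Polynomial.monomial w (q.coeff w)) • m)]
  by_cases hmem : d - v ∈ q.support
  · rw [if_pos hmem]
  · rw [if_neg hmem]
    have : q.coeff (d - v) = 0 := Polynomial.notMem_support_iff.mp hmem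
    rw [this]
    simp

include h𝒩 h𝒩gr in
lemma projOf_poly_smul_of_not_le' {v d : ℕ} (hvd : ¬ v ≤ d) (q : Polynomial K) {m : M'}
    (hm : m ∈ 𝒩 v) : projOf h𝒩 d (q • m) = 0 := by
  classical
  rw [smul_eq_sum_monomial_poly, map_sum]
  apply Finset.sum_eq_zero
  intro w _
  have hw : w + v ≠ d := by omega
  exact projOf_mem_ne h𝒩 hw (h𝒩gr w v _ m hm)

end Poly


set_option maxHeartbeats 1600000 in
theorem statement17 (K : Type) [Field K] (r : ℕ)
    (M : Type) [AddCommGroup M] [Module (MvPolynomial (Fin r) K) M]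
    [Module K M] [IsScalarTower K (MvPolynomial (Fin r) K) M]
    [Module.Finite (MvPolynomial (Fin r) K) M]
    (ℳ : (Fin r →₀ ℕ) → Submodule K M)
    (hM : DirectSum.IsInternal ℳ)
    (hMgr : ∀ (u v : Fin r →₀ ℕ) (c : K) (m : M), m ∈ ℳ v →
      (MvPolynomial.monomial u c) • m ∈ ℳ (u + v))
    (u u₀ : Fin r →₀ ℕ) (hu : ∀ i : Fin r, 0 < u i) :
    (∃ N : ℕ, ∀ j : ℕ, N ≤ j →
        Module.finrank K ↥(ℳ (j • u + u₀)) = rk (MvPolynomial (Fin r) K) M) ∧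
    (∀ (M' : Type) [AddCommGroup M'] [Module (Polynomial K) M']
        [Module K M'] [IsScalarTower K (Polynomial K) M']
        (𝒩 : ℕ → Submodule K M'),
      DirectSum.IsInternal 𝒩 →
      ∀ e : ∀ j : ℕ, ↥(ℳ (j • u + u₀)) ≃ₗ[K] ↥(𝒩 j),
        (∀ (j : ℕ) (m : M) (hm1 : m ∈ ℳ (j • u + u₀))
            (hm2 : (MvPolynomial.monomial u (1 : K)) • m ∈ ℳ ((j + 1) • u + u₀)),
          (Polynomial.X : Polynomial K) • ((e j ⟨m, hm1⟩ : M')) =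
            ((e (j + 1) ⟨(MvPolynomial.monomial u (1 : K)) • m, hm2⟩ : M'))) →
        rk (Polynomial K) M' = rk (MvPolynomial (Fin r) K) M) := by
  classical
  obtain ⟨hFD, N, hkey⟩ := key hM hMgr u u₀ hu
  constructor
  · exact ⟨N, fun j hj => (hkey j hj).2⟩
  intro M' _ _ _ _ 𝒩 h𝒩 e hcompat
  have hmonu : (MvPolynomial.monomial u (1 : K)) ≠ 0 := by
    simp [MvPolynomial.monomial_eq_zero]
  have hline1 : ∀ j : ℕ, u + (j • u + u₀) = ((j + 1) • u + u₀) := by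
    intro j
    rw [succ_nsmul]
    abel
  have hmulmem : ∀ (j : ℕ) (m : M), m ∈ ℳ (j • u + u₀) →
      (MvPolynomial.monomial u (1 : K)) • m ∈ ℳ ((j + 1) • u + u₀) := by
    intro j m hm
    have h1 := hMgr u _ 1 m hm
    rwa [hline1 j] at h1
  set μmap : ∀ j : ℕ, ↥(ℳ (j • u + u₀)) →ₗ[K] ↥(ℳ ((j + 1) • u + u₀)) := fun j =>
    { toFun := fun m => ⟨(MvPolynomial.monomial u (1 : K)) • (m : M), hmulmem j _ m.2⟩
      map_add' := fun x y => by
        apply Subtype.coe_injective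
        simp [smul_add]
      map_smul' := fun κ x => by
        apply Subtype.coe_injective
        simp [smul_comm κ] } with hμmap
  have hX : ∀ (j : ℕ) (v : ↥(𝒩 j)), (Polynomial.X : Polynomial K) • (v : M')
      = ((e (j + 1)) (μmap j ((e j).symm v)) : M') := by
    intro j v
    have h1 := hcompat j (((e j).symm v : M)) ((e j).symm v).2
      (hmulmem j _ ((e j).symm v).2)
    have h2 : (⟨(((e j).symm v : M)), ((e j).symm v).2⟩ : ↥(ℳ (j • u + u₀)))
        = (e j).symm v := rfl
    rw [h2, (e j).apply_symm_apply] at h1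
    exact h1
  have hXmem : ∀ (j : ℕ) (v : M'), v ∈ 𝒩 j →
      (Polynomial.X : Polynomial K) • v ∈ 𝒩 (j + 1) := by
    intro j v hv
    rw [hX j ⟨v, hv⟩]
    exact (e (j + 1) _).2
  have hXpowmem : ∀ (k j : ℕ) (v : M'), v ∈ 𝒩 j →
      ((Polynomial.X : Polynomial K) ^ k) • v ∈ 𝒩 (j + k) := by
    intro k
    induction k with
    | zero => intro j v hv; simpa using hv
    | succ k ih =>
      intro j v hv
      have h1 : ((Polynomial.X : Polynomial K) ^ (k + 1)) • v
          = ((Polynomial.X : Polynomial K) ^ k) • ((Polynomial.X : Polynomial K) • v) := by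
        rw [← mul_smul, ← pow_succ]
      rw [h1, show j + (k + 1) = (j + 1) + k by omega]
      exact ih (j + 1) _ (hXmem j v hv)
  have hXinj : ∀ (j : ℕ), N ≤ j → ∀ v : ↥(𝒩 j),
      (Polynomial.X : Polynomial K) • (v : M') = 0 → v = 0 := by
    intro j hj v h
    rw [hX j v] at h
    have h3 : μmap j ((e j).symm v) = 0 :=
      (e (j + 1)).map_eq_zero_iff.mp (Subtype.ext (by simpa using h))
    have h4 : (MvPolynomial.monomial u (1 : K)) • (((e j).symm v : M)) = 0 := by
      have h5 := congrArg (fun x : ↥(ℳ ((j + 1) • u + u₀)) => (x : M)) h3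
      simpa [hμmap] using h5
    have h5 : (((e j).symm v) : M) = 0 := (hkey j hj).1 _ ((e j).symm v).2 ⟨_, hmonu, h4⟩
    have h6 : (e j).symm v = 0 := Subtype.coe_injective (by simpa using h5)
    have h7 := congrArg (e j) h6
    rwa [(e j).apply_symm_apply, map_zero] at h7
  have hXpowinj : ∀ (k j : ℕ), N ≤ j → ∀ v : ↥(𝒩 j),
      ((Polynomial.X : Polynomial K) ^ k) • (v : M') = 0 → v = 0 := by
    intro k
    induction k with
    | zero =>
      intro j hj v h
      apply Subtype.coe_injective
      simpa using h
    | succ k ih =>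
      intro j hj v h
      have h1 : ((Polynomial.X : Polynomial K) ^ k) •
          ((Polynomial.X : Polynomial K) • (v : M')) = 0 := by
        rw [← mul_smul, ← pow_succ]
        exact h
      have h2 : (⟨(Polynomial.X : Polynomial K) • (v : M'), hXmem j _ v.2⟩ : ↥(𝒩 (j + 1))) = 0 :=
        ih (j + 1) (le_trans hj (Nat.le_succ j)) _ h1
      have h3 : (Polynomial.X : Polynomial K) • (v : M') = 0 := by
        have h4 := congrArg (fun x : ↥(𝒩 (j + 1)) => (x : M')) h2
        simpa using h4
      exact hXinj j hj v h3
  have hμsurj : ∀ j : ℕ, N ≤ j → Function.Surjective (μmap j) := by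
    intro j hj
    have hinj : Function.Injective (μmap j) := by
      intro x y hxy
      have h1 : μmap j (x - y) = 0 := by rw [map_sub, hxy, sub_self]
      have h2 : (MvPolynomial.monomial u (1 : K)) • ((x - y : ↥(ℳ (j • u + u₀))) : M) = 0 := by
        have h5 := congrArg (fun z : ↥(ℳ ((j + 1) • u + u₀)) => (z : M)) h1
        simpa [hμmap] using h5
      have h3 : ((x - y : ↥(ℳ (j • u + u₀))) : M) = 0 :=
        (hkey j hj).1 _ (x - y).2 ⟨_, hmonu, h2⟩
      have h4 : x - y = 0 := Subtype.coe_injective (by simpa using h3)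
      exact sub_eq_zero.mp h4
    haveI := hFD (j • u + u₀)
    haveI := hFD ((j + 1) • u + u₀)
    have hrr : Module.finrank K ↥(ℳ (j • u + u₀))
        = Module.finrank K ↥(ℳ ((j + 1) • u + u₀)) := by
      rw [(hkey j hj).2, (hkey (j + 1) (le_trans hj (Nat.le_succ j))).2]
    have h4 := LinearMap.finrank_range_of_inj hinj
    have h5 : LinearMap.range (μmap j) = ⊤ :=
      Submodule.eq_top_of_finrank_eq (by rw [h4, ← hrr])
    exact LinearMap.range_eq_top.mp h5
  have hXsurj : ∀ j : ℕ, N ≤ j → ∀ w : M', w ∈ 𝒩 (j + 1) →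
      ∃ v : M', v ∈ 𝒩 j ∧ (Polynomial.X : Polynomial K) • v = w := by
    intro j hj w hw
    obtain ⟨x, hx⟩ := hμsurj j hj ((e (j + 1)).symm ⟨w, hw⟩)
    refine ⟨(e j x : M'), (e j x).2, ?_⟩
    rw [hX j (e j x), (e j).symm_apply_apply, hx, (e (j + 1)).apply_symm_apply]
  have hXpowsurj : ∀ (k j : ℕ), N ≤ j → ∀ w : M', w ∈ 𝒩 (j + k) →
      ∃ v : M', v ∈ 𝒩 j ∧ ((Polynomial.X : Polynomial K) ^ k) • v = w := by
    intro k
    induction k with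
    | zero =>
      intro j hj w hw
      exact ⟨w, by simpa using hw, by simp⟩
    | succ k ih =>
      intro j hj w hw
      obtain ⟨v1, hv1, hv1X⟩ := hXsurj (j + k) (le_trans hj (Nat.le_add_right j k)) w
        (by rwa [show j + k + 1 = j + (k + 1) by omega])
      obtain ⟨v0, hv0, hv0X⟩ := ih j hj v1 hv1
      refine ⟨v0, hv0, ?_⟩
      rw [pow_succ', mul_smul, hv0X]
      exact hv1X
  have monKP : ∀ (w : ℕ) (κ : K) (v : M'),
      (Polynomial.monomial w κ) • v = κ • (((Polynomial.X : Polynomial K) ^ w) • v) := by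
    intro w κ v
    rw [← Polynomial.C_mul_X_pow_eq_monomial, mul_smul]
    have h1 : (Polynomial.C κ) = algebraMap K (Polynomial K) κ := by
      rw [Polynomial.algebraMap_eq]
    rw [h1, algebraMap_smul]
  have h𝒩gr : ∀ (w jv : ℕ) (κ : K) (v : M'), v ∈ 𝒩 jv →
      (Polynomial.monomial w κ) • v ∈ 𝒩 (w + jv) := by
    intro w jv κ v hv
    rw [monKP, add_comm w jv]
    exact Submodule.smul_mem _ κ (hXpowmem w jv v hv)
  set Q' : Type := FractionRing (Polynomial K) with hQ'
  set θ' : M' →ₗ[Polynomial K] TensorProduct (Polynomial K) Q' M'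
    := TensorProduct.mk (Polynomial K) Q' M' 1 with hθ'
  haveI hloc' : IsLocalizedModule (nonZeroDivisors (Polynomial K)) θ' :=
    (isLocalizedModule_iff_isBaseChange (nonZeroDivisors (Polynomial K)) Q' θ').mpr
      (TensorProduct.isBaseChange (Polynomial K) M' Q')
  have hker' : ∀ m : M', θ' m = 0 → ∃ s : Polynomial K, s ≠ 0 ∧ s • m = 0 := by
    intro m h
    obtain ⟨s', hs'⟩ := (IsLocalizedModule.eq_zero_iff (nonZeroDivisors (Polynomial K)) θ').mp h
    rw [Submonoid.smul_def] at hs'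
    exact ⟨s', nonZeroDivisors.ne_zero s'.2, hs'⟩
  have hsm' : ∀ (p : Polynomial K) (m : M'),
      θ' (p • m) = (algebraMap (Polynomial K) Q' p) • θ' m := by
    intro p m
    rw [map_smul, algebraMap_smul]
  haveI hFDN : FiniteDimensional K ↥(𝒩 N) := by
    haveI := hFD (N • u + u₀)
    exact LinearEquiv.finiteDimensional (e N)
  set nn : ℕ := Module.finrank K ↥(𝒩 N) with hnn
  have hnnρ : nn = Module.finrank K ↥(ℳ (N • u + u₀)) := ((e N).finrank_eq).symm
  set bb : Module.Basis (Fin nn) K ↥(𝒩 N) := Module.finBasis K ↥(𝒩 N) with hbbN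
  have hindep : LinearIndependent Q' (fun i : Fin nn => θ' ((bb i : M'))) := by
    rw [Fintype.linearIndependent_iff]
    intro q hq
    obtain ⟨bden, hbden⟩ := IsLocalization.exist_integer_multiples_of_finite
      (nonZeroDivisors (Polynomial K)) q
    choose p hp using hbden
    have h1 : θ' (∑ i, p i • (bb i : M')) = 0 := by
      rw [map_sum]
      have h2 : ∀ i : Fin nn, θ' (p i • (bb i : M'))
          = (bden : Polynomial K) • (q i • θ' (bb i : M')) := by
        intro i
        rw [hsm', hp i, smul_assoc]
      rw [Finset.sum_congr rfl fun i _ => h2 i, ← Finset.smul_sum, hq, smul_zero]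
    obtain ⟨cc, hcc0, hcc⟩ := hker' _ h1
    have hcc' : ∑ i, ((cc * p i) • (bb i : M')) = 0 := by
      rw [← hcc, Finset.smul_sum]
      exact Finset.sum_congr rfl fun i _ => (mul_smul cc (p i) _)
    have hcoeff : ∀ (w : ℕ) (i : Fin nn), (cc * p i).coeff w = 0 := by
      intro w
      have h3 := congrArg (projOf h𝒩 (w + N)) hcc'
      rw [map_sum, map_zero] at h3
      have h4 : ∀ i : Fin nn, projOf h𝒩 (w + N) ((cc * p i) • (bb i : M'))
          = (cc * p i).coeff w • (((Polynomial.X : Polynomial K) ^ w) • (bb i : M')) := by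
        intro i
        rw [projOf_poly_smul_of_le' h𝒩 h𝒩gr (le_add_self : N ≤ w + N) _ (bb i).2,
          Nat.add_sub_cancel, monKP]
      rw [Finset.sum_congr rfl fun i _ => h4 i] at h3
      set z : M' := ∑ i, (cc * p i).coeff w • ((bb i : M')) with hz
      have hz1 : ((Polynomial.X : Polynomial K) ^ w) • z = 0 := by
        rw [hz, Finset.smul_sum, ← h3]
        exact Finset.sum_congr rfl fun i _ =>
          (smul_comm (((Polynomial.X : Polynomial K) ^ w)) ((cc * p i).coeff w) _)
      have hzmem : z ∈ 𝒩 N := Submodule.sum_mem _ fun i _ => Submodule.smul_mem _ _ (bb i).2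
      have hz0 : (⟨z, hzmem⟩ : ↥(𝒩 N)) = 0 := hXpowinj w N le_rfl ⟨z, hzmem⟩ hz1
      have hz0' : z = 0 := by
        have h6 := congrArg (fun x : ↥(𝒩 N) => (x : M')) hz0
        simpa using h6
      have hz2 : (∑ i, (cc * p i).coeff w • bb i) = (0 : ↥(𝒩 N)) := by
        apply Subtype.coe_injective
        push_cast
        rw [← hz0', hz]
      intro i
      exact (Fintype.linearIndependent_iff.mp bb.linearIndependent) _ hz2 i
    have hgz : ∀ i : Fin nn, p i = 0 := by
      intro i
      have h6 : cc * p i = 0 := Polynomial.ext fun w => by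
        rw [hcoeff w i, Polynomial.coeff_zero]
      rcases mul_eq_zero.mp h6 with h | h
      · exact absurd h hcc0
      · exact h
    intro i
    have h5 := hp i
    rw [hgz i, map_zero] at h5
    have hb0 : algebraMap (Polynomial K) Q' (bden : Polynomial K) ≠ 0 :=
      IsFractionRing.to_map_ne_zero_of_mem_nonZeroDivisors bden.2
    have h6 : algebraMap (Polynomial K) Q' (bden : Polynomial K) * q i = 0 := by
      rw [← Algebra.smul_def, ← h5]
    rcases mul_eq_zero.mp h6 with h | h
    · exact absurd h hb0
    · exact h
  have hXpowne : ∀ k : ℕ, ((Polynomial.X : Polynomial K) ^ k) ≠ 0 :=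
    fun k => pow_ne_zero k Polynomial.X_ne_zero
  have hspan : Submodule.span Q' (Set.range fun i : Fin nn => θ' (bb i : M')) = ⊤ := by
    set P : Submodule Q' (TensorProduct (Polynomial K) Q' M') :=
      Submodule.span Q' (Set.range fun i : Fin nn => θ' (bb i : M')) with hP
    have hP1 : ∀ v : M', v ∈ 𝒩 N → θ' v ∈ P := by
      intro m hm
      have hrepr := bb.sum_repr ⟨m, hm⟩
      have hm' : m = ∑ i, (bb.repr ⟨m, hm⟩) i • (bb i : M') := by
        conv_lhs => rw [show m = ((⟨m, hm⟩ : ↥(𝒩 N)) : M') from rfl, ← hrepr]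
        push_cast
        rfl
      rw [hm', map_sum]
      apply Submodule.sum_mem
      intro i _
      have h7 : ((bb.repr ⟨m, hm⟩) i : K) • (bb i : M')
          = (algebraMap K (Polynomial K) ((bb.repr ⟨m, hm⟩) i)) • (bb i : M') :=
        (algebraMap_smul (Polynomial K) _ _).symm
      rw [h7, hsm']
      exact Submodule.smul_mem _ _ (Submodule.subset_span ⟨i, rfl⟩)
    have hPj : ∀ (jj : ℕ) (v : M'), v ∈ 𝒩 jj → θ' v ∈ P := by
      intro jj v hv
      rcases le_or_gt N jj with hle | hlt
      · obtain ⟨k, rfl⟩ := Nat.exists_eq_add_of_le hle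
        obtain ⟨v0, hv0, hv0X⟩ := hXpowsurj k N le_rfl v hv
        rw [← hv0X, hsm']
        exact Submodule.smul_mem _ _ (hP1 v0 hv0)
      · set k := N - jj with hk
        have hmem : ((Polynomial.X : Polynomial K) ^ k) • v ∈ 𝒩 N := by
          have h8 := hXpowmem k jj v hv
          rwa [show jj + k = N by omega] at h8
        have h8 := hP1 _ hmem
        rw [hsm'] at h8
        have hne : algebraMap (Polynomial K) Q' ((Polynomial.X : Polynomial K) ^ k) ≠ 0 :=
          IsFractionRing.to_map_ne_zero_of_mem_nonZeroDivisors
            (mem_nonZeroDivisors_of_ne_zero (hXpowne k))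
        have h9 := P.smul_mem
          (algebraMap (Polynomial K) Q' ((Polynomial.X : Polynomial K) ^ k))⁻¹ h8
        rwa [smul_smul, inv_mul_cancel₀ hne, one_smul] at h9
    have hP3 : ∀ m : M', θ' m ∈ P := by
      intro m
      obtain ⟨fs, hfs⟩ := exists_finset_sum_projOf h𝒩 m
      rw [hfs, map_sum]
      exact Submodule.sum_mem _ fun i _ => hPj i _ (projOf_mem h𝒩 i m)
    rw [eq_top_iff]
    rintro z -
    induction z using TensorProduct.induction_on with
    | zero => exact P.zero_mem
    | tmul qq m =>
        have h10 : qq ⊗ₜ[Polynomial K] m = qq • θ' m := by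
          have h11 : θ' m = (1 : Q') ⊗ₜ[Polynomial K] m := rfl
          rw [h11, TensorProduct.smul_tmul', smul_eq_mul, mul_one]
        rw [h10]
        exact P.smul_mem qq (hP3 m)
    | add x y hx hy => exact P.add_mem hx hy
  haveI hfin : Module.Finite Q' (TensorProduct (Polynomial K) Q' M') :=
    ⟨Submodule.fg_def.mpr ⟨_, Set.finite_range _, hspan⟩⟩
  have hub : nn ≤ Module.finrank Q' (TensorProduct (Polynomial K) Q' M') := by
    simpa using hindep.fintype_card_le_finrank
  have hlb : Module.finrank Q' (TensorProduct (Polynomial K) Q' M') ≤ nn := by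
    simpa using finrank_le_of_span_eq_top hspan
  have hfr : Module.finrank Q' (TensorProduct (Polynomial K) Q' M') = nn :=
    le_antisymm hlb hub
  exact hfr.trans (hnnρ.trans ((hkey N le_rfl).2))
end
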